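/- arXiv:1411.0594 — 2 statements merged into one kernel-verified Lean document; each statement's English description precedes it below -/
import Mathlib

section
/- In the two-user scalar Gaussian MAC with finite-alphabet inputs, for every g₁ > 0 the map g₁ ↦ I(g₁, g₂) is differentiable and its derivative satisfies ∂I/∂g₁ = snr·(a²·g₁·E₁₁ + a·b·g₂·E₁₂), where E₁₁ and E₁₂ are evaluated at amplitudes (g₁, g₂). -/
open MeasureTheory Finset Real

namespace Stmt4Aux

noncomputable def c0 : ℝ := (Real.sqrt (2 * Real.pi))⁻¹

noncomputable def gφ (t : ℝ) : ℝ := c0 * Real.exp (-t ^ 2 / 2)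

lemma c0_pos : 0 < c0 := by
  have : 0 < Real.sqrt (2 * Real.pi) := Real.sqrt_pos.2 (by positivity)
  exact inv_pos.2 this

lemma gφ_pos (t : ℝ) : 0 < gφ t :=
  mul_pos c0_pos (Real.exp_pos _)

lemma gφ_le (t : ℝ) : gφ t ≤ c0 := by
  unfold gφ
  nth_rewrite 2 [show c0 = c0 * 1 by ring]
  gcongr
  · exact c0_pos.le
  · exact Real.exp_le_one_iff.2 (by nlinarith [sq_nonneg t])

lemma log_gφ (t : ℝ) : Real.log (gφ t) = Real.log c0 - t ^ 2 / 2 := by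
  unfold gφ
  rw [Real.log_mul (ne_of_gt c0_pos) (Real.exp_ne_zero _), Real.log_exp]
  ring

lemma hasDerivAt_gφ (t : ℝ) : HasDerivAt gφ (-t * gφ t) t := by
  have h1 : HasDerivAt (fun t : ℝ => -t ^ 2 / 2) (-t) t := by
    have := ((hasDerivAt_pow 2 t).neg).div_const 2
    simpa using this.congr_deriv (by ring)
  have h2 := (Real.hasDerivAt_exp (-t ^ 2 / 2)).comp t h1
  have h3 := h2.const_mul c0
  have : HasDerivAt gφ (c0 * (Real.exp (-t ^ 2 / 2) * -t)) t := h3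
  exact this.congr_deriv (by unfold gφ; ring)

lemma continuous_gφ : Continuous gφ := by
  unfold gφ; continuity

lemma exp_quarter_le (b y : ℝ) :
    Real.exp (b * |y| - y ^ 2 / 4) ≤ Real.exp (2 * b ^ 2) * Real.exp (-(1/8) * y ^ 2) := by
  rw [← Real.exp_add]
  apply Real.exp_le_exp.2
  nlinarith [sq_nonneg (b - |y| / 4), sq_nonneg (b + |y| / 4), sq_abs y, abs_nonneg y, sq_nonneg b]

/-- Master integrability lemma: anything dominated by `C · exp(b|y| − y²/4)` is integrable. -/
lemma integrable_of_le_gauss {f : ℝ → ℝ} (hf : AEStronglyMeasurable f volume) (C b : ℝ)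
    (h : ∀ y, |f y| ≤ C * Real.exp (b * |y| - y ^ 2 / 4)) : Integrable f := by
  have hint : Integrable (fun y : ℝ => (C * Real.exp (2 * b ^ 2)) *
      Real.exp (-(1/8) * y ^ 2)) :=
    (integrable_exp_neg_mul_sq (by norm_num : (0:ℝ) < 1/8)).const_mul _
  refine hint.mono hf (Filter.Eventually.of_forall fun y => ?_)
  have hC : 0 ≤ C := by
    have := (abs_nonneg (f y)).trans (h y)
    by_contra hC
    push_neg at hC
    nlinarith [Real.exp_pos (b * |y| - y ^ 2 / 4)]
  have h2 := (h y).trans (by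
    have := exp_quarter_le b y
    calc C * Real.exp (b * |y| - y ^ 2 / 4)
        ≤ C * (Real.exp (2 * b ^ 2) * Real.exp (-(1/8) * y ^ 2)) := by
          exact mul_le_mul_of_nonneg_left this hC
      _ = (C * Real.exp (2 * b ^ 2)) * Real.exp (-(1/8) * y ^ 2) := by ring)
  rw [Real.norm_eq_abs, Real.norm_eq_abs]
  refine h2.trans (le_abs_self _)


lemma abs_le_exp (y : ℝ) : |y| ≤ Real.exp |y| :=
  le_trans (by linarith) (Real.add_one_le_exp |y|)

lemma one_add_sq_le_exp (y : ℝ) : 1 + y ^ 2 ≤ 5 * Real.exp |y| := by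
  have h := Real.add_one_le_exp (|y| / 2)
  have h2 : Real.exp |y| = Real.exp (|y|/2) * Real.exp (|y|/2) := by
    rw [← Real.exp_add]; ring_nf
  have h3 : (1 + |y|/2) * (1 + |y|/2) ≤ Real.exp |y| := by
    rw [h2]
    have := Real.exp_pos (|y|/2)
    have ha : 0 ≤ 1 + |y|/2 := by positivity
    nlinarith [abs_nonneg y]
  have h4 : (1:ℝ) ≤ Real.exp |y| := Real.one_le_exp (abs_nonneg y)
  have h5 : y ^ 2 = |y| ^ 2 := (sq_abs y).symm
  nlinarith [abs_nonneg y]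

lemma one_add_abs_le_exp (y : ℝ) : 1 + |y| ≤ 2 * Real.exp |y| := by
  have h4 : (1:ℝ) ≤ Real.exp |y| := Real.one_le_exp (abs_nonneg y)
  have := abs_le_exp y
  linarith

/-- Funnel: integrability of anything with a (quadratic)·(linear)·Gaussian envelope. -/
lemma integrable_poly_gauss {f : ℝ → ℝ} (hf : AEStronglyMeasurable f volume) (C M : ℝ)
    (h : ∀ y, |f y| ≤ C * (1 + y ^ 2) * ((1 + |y|) * Real.exp (M * |y| - y ^ 2 / 4))) :
    Integrable f := by
  have hC : 0 ≤ C := by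
    by_contra hC
    push_neg at hC
    have h0 := h 0
    rw [(by norm_num : |(0:ℝ)| = 0)] at h0
    norm_num at h0
    nlinarith [abs_nonneg (f 0), Real.exp_pos (-(0:ℝ) ^ 2 / 4), h0,
      (by norm_num : M * (0:ℝ) - (0:ℝ)^2/4 = -(0:ℝ)^2/4)]
  refine integrable_of_le_gauss hf (10 * C) (M + 2) fun y => ?_
  have h1 := one_add_sq_le_exp y
  have h2 := one_add_abs_le_exp y
  have key : C * (1 + y ^ 2) * ((1 + |y|) * Real.exp (M * |y| - y ^ 2 / 4)) ≤
      10 * C * Real.exp ((M + 2) * |y| - y ^ 2 / 4) := by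
    have e1 : Real.exp ((M + 2) * |y| - y ^ 2 / 4) =
        Real.exp |y| * (Real.exp |y| * Real.exp (M * |y| - y ^ 2 / 4)) := by
      rw [← Real.exp_add, ← Real.exp_add]; ring_nf
    rw [e1]
    have ep := Real.exp_pos (M * |y| - y ^ 2 / 4)
    have e3 : (1 + y ^ 2) * (1 + |y|) ≤ 10 * (Real.exp |y| * Real.exp |y|) := by
      have ha : 0 ≤ 1 + y ^ 2 := by positivity
      have hb : 0 ≤ 1 + |y| := by positivity
      calc (1 + y ^ 2) * (1 + |y|) ≤ (5 * Real.exp |y|) * (2 * Real.exp |y|) := by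
            apply mul_le_mul h1 h2 hb (by positivity)
        _ = 10 * (Real.exp |y| * Real.exp |y|) := by ring
    nlinarith [Real.exp_pos |y|, mul_le_mul_of_nonneg_right
      (mul_le_mul_of_nonneg_left e3 hC) ep.le]
  exact (h y).trans key

section Mixture

variable {ι : Type*} [Fintype ι]

/-- The mean of component `i` at parameter `g`. -/
noncomputable def mm (c d : ι → ℝ) (g : ℝ) (i : ι) : ℝ := c i + d i * g

/-- The mixture density. -/
noncomputable def pf (w c d : ι → ℝ) (g y : ℝ) : ℝ := ∑ i, w i * gφ (y - mm c d g i)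

/-- Uniform bound on the means for `|g| ≤ G`. -/
noncomputable def Mb (c d : ι → ℝ) (G : ℝ) : ℝ := ∑ i, (|c i| + |d i| * G)

lemma Mb_nonneg (c d : ι → ℝ) {G : ℝ} (hG : 0 ≤ G) : 0 ≤ Mb c d G :=
  Finset.sum_nonneg fun i _ => by positivity

lemma mm_abs_le (c d : ι → ℝ) {g G : ℝ} (hg : |g| ≤ G) (i : ι) :
    |mm c d g i| ≤ Mb c d G := by
  have hG : 0 ≤ G := (abs_nonneg g).trans hg
  have h1 : |mm c d g i| ≤ |c i| + |d i| * G := by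
    unfold mm
    calc |c i + d i * g| ≤ |c i| + |d i * g| := abs_add_le _ _
      _ = |c i| + |d i| * |g| := by rw [abs_mul]
      _ ≤ |c i| + |d i| * G := by gcongr
  refine h1.trans ?_
  exact Finset.single_le_sum (f := fun i => |c i| + |d i| * G)
    (fun j _ => by positivity) (Finset.mem_univ i)

lemma gφ_sub_le {m M : ℝ} (hm : |m| ≤ M) (y : ℝ) :
    gφ (y - m) ≤ c0 * Real.exp (M * |y| - y ^ 2 / 4) := by
  unfold gφ
  have : -(y - m) ^ 2 / 2 ≤ M * |y| - y ^ 2 / 4 := by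
    have h1 : m * y ≤ M * |y| := by
      calc m * y ≤ |m * y| := le_abs_self _
        _ = |m| * |y| := abs_mul m y
        _ ≤ M * |y| := by gcongr
    nlinarith [sq_nonneg m, sq_nonneg (y - m), sq_nonneg y]
  have := Real.exp_le_exp.2 this
  exact mul_le_mul_of_nonneg_left this c0_pos.le

lemma c0_le_one : c0 ≤ 1 := by
  unfold c0
  rw [inv_le_one_iff₀]
  right
  rw [show (1:ℝ) = Real.sqrt 1 by simp]
  exact Real.sqrt_le_sqrt (by nlinarith [Real.pi_gt_three])

lemma pf_pos [Nonempty ι] {w : ι → ℝ} (c d : ι → ℝ) (hw : ∀ i, 0 < w i) (g y : ℝ) :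
    0 < pf w c d g y := by
  unfold pf
  exact Finset.sum_pos (fun i _ => mul_pos (hw i) (gφ_pos _)) Finset.univ_nonempty

lemma pf_le_c0 {w : ι → ℝ} (c d : ι → ℝ) (hw : ∀ i, 0 < w i) (hw1 : ∑ i, w i = 1)
    (g y : ℝ) : pf w c d g y ≤ c0 := by
  unfold pf
  calc ∑ i, w i * gφ (y - mm c d g i) ≤ ∑ i, w i * c0 := by
        apply Finset.sum_le_sum
        intro i _
        exact mul_le_mul_of_nonneg_left (gφ_le _) (hw i).le
    _ = c0 := by rw [← Finset.sum_mul, hw1, one_mul]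

lemma pf_le_gauss {w : ι → ℝ} {c d : ι → ℝ} (hw : ∀ i, 0 < w i) (hw1 : ∑ i, w i = 1)
    {g G : ℝ} (hg : |g| ≤ G) (y : ℝ) :
    pf w c d g y ≤ c0 * Real.exp (Mb c d G * |y| - y ^ 2 / 4) := by
  unfold pf
  calc ∑ i, w i * gφ (y - mm c d g i)
      ≤ ∑ i, w i * (c0 * Real.exp (Mb c d G * |y| - y ^ 2 / 4)) := by
        apply Finset.sum_le_sum
        intro i _
        exact mul_le_mul_of_nonneg_left (gφ_sub_le (mm_abs_le c d hg i) y) (hw i).le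
    _ = c0 * Real.exp (Mb c d G * |y| - y ^ 2 / 4) := by rw [← Finset.sum_mul, hw1, one_mul]

lemma abs_log_gφ_le {m M y : ℝ} (hm : |m| ≤ M) :
    |Real.log (gφ (y - m))| ≤ |Real.log c0| + (1 + M) ^ 2 * (1 + y ^ 2) := by
  rw [log_gφ]
  have hM : 0 ≤ M := (abs_nonneg m).trans hm
  have h1 : (y - m) ^ 2 ≤ (1 + M) ^ 2 * (1 + y ^ 2) * 2 := by
    have h2 : |y - m| ≤ |y| + M := by
      calc |y - m| ≤ |y| + |m| := abs_sub _ _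
        _ ≤ |y| + M := by linarith
    have h3 : (y - m) ^ 2 ≤ (|y| + M) ^ 2 := by
      rw [← sq_abs (y - m)]
      exact pow_le_pow_left₀ (abs_nonneg _) h2 2
    have h4 : (|y| + M) ^ 2 ≤ (1 + M) ^ 2 * (1 + y ^ 2) * 2 := by
      nlinarith [abs_nonneg y, sq_abs y, sq_nonneg (1 - |y|), sq_nonneg (|y| - M),
        sq_nonneg (|y| + M), sq_nonneg M]
    linarith
  calc |Real.log c0 - (y - m) ^ 2 / 2| ≤ |Real.log c0| + (y - m) ^ 2 / 2 := by
        refine (abs_sub _ _).trans ?_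
        rw [abs_div, abs_of_nonneg (sq_nonneg (y - m)), (by norm_num : |(2:ℝ)| = 2)]
    _ ≤ |Real.log c0| + (1 + M) ^ 2 * (1 + y ^ 2) := by linarith

lemma abs_log_pf_le [Nonempty ι] {w c d : ι → ℝ} (hw : ∀ i, 0 < w i) (hw1 : ∑ i, w i = 1)
    {g G : ℝ} (hg : |g| ≤ G) (y : ℝ) :
    |Real.log (pf w c d g y)| ≤
      |Real.log (w (Classical.arbitrary ι))| + 2 * |Real.log c0| +
        (1 + Mb c d G) ^ 2 * (1 + y ^ 2) := by
  set i₀ := Classical.arbitrary ι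
  have hppos := pf_pos c d hw g y
  have hup : Real.log (pf w c d g y) ≤ 0 := by
    apply Real.log_nonpos hppos.le
    exact (pf_le_c0 c d hw hw1 g y).trans c0_le_one
  have hlow : Real.log (w i₀) + Real.log (gφ (y - mm c d g i₀)) ≤ Real.log (pf w c d g y) := by
    rw [← Real.log_mul (hw i₀).ne' (gφ_pos _).ne']
    apply Real.log_le_log (mul_pos (hw i₀) (gφ_pos _))
    unfold pf
    exact Finset.single_le_sum (f := fun i => w i * gφ (y - mm c d g i))
      (fun j _ => (mul_pos (hw j) (gφ_pos _)).le) (Finset.mem_univ i₀)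
  have h2 : |Real.log (gφ (y - mm c d g i₀))| ≤
      |Real.log c0| + (1 + Mb c d G) ^ 2 * (1 + y ^ 2) := abs_log_gφ_le (mm_abs_le c d hg i₀)
  have h3 := neg_abs_le (Real.log (w i₀))
  have h4 := neg_abs_le (Real.log (gφ (y - mm c d g i₀)))
  rw [abs_of_nonpos hup]
  have h5 := abs_nonneg (Real.log c0)
  linarith

/-- Derivative of `pf` in `y`. -/
noncomputable def pfd (w c d : ι → ℝ) (g y : ℝ) : ℝ :=
  ∑ i, w i * (-(y - mm c d g i) * gφ (y - mm c d g i))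

lemma hasDerivAt_gφ_sub (m y : ℝ) :
    HasDerivAt (fun y => gφ (y - m)) (-(y - m) * gφ (y - m)) y := by
  have h1 : HasDerivAt (fun y : ℝ => y - m) 1 y := (hasDerivAt_id y).sub_const m
  have := (hasDerivAt_gφ (y - m)).comp y h1
  exact this.congr_deriv (by ring)

lemma hasDerivAt_pf_y (w c d : ι → ℝ) (g y : ℝ) :
    HasDerivAt (fun y => pf w c d g y) (pfd w c d g y) y := by
  unfold pf pfd
  exact HasDerivAt.fun_sum fun i _ => (hasDerivAt_gφ_sub (mm c d g i) y).const_mul (w i)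

/-- Derivative of component `i` of `pf` in `g`. -/
lemma hasDerivAt_gφ_mm (c d : ι → ℝ) (i : ι) (g y : ℝ) :
    HasDerivAt (fun g => gφ (y - mm c d g i))
      (d i * ((y - mm c d g i) * gφ (y - mm c d g i))) g := by
  have h1 : HasDerivAt (fun g : ℝ => y - mm c d g i) (-(d i)) g := by
    unfold mm
    have h : HasDerivAt (fun g : ℝ => c i + d i * g) (d i) g := by
      simpa using ((hasDerivAt_id g).const_mul (d i)).const_add (c i)
    simpa using h.const_sub y
  have := (hasDerivAt_gφ (y - mm c d g i)).comp g h1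
  exact this.congr_deriv (by ring)

lemma continuous_pf (w c d : ι → ℝ) (g : ℝ) : Continuous (fun y => pf w c d g y) := by
  unfold pf
  exact continuous_finset_sum _ fun i _ =>
    (continuous_const.mul (continuous_gφ.comp (continuous_id.sub continuous_const)))

lemma continuous_log_pf [Nonempty ι] {w : ι → ℝ} (c d : ι → ℝ) (hw : ∀ i, 0 < w i) (g : ℝ) :
    Continuous (fun y => Real.log (pf w c d g y)) :=
  (continuous_pf w c d g).log fun y => (pf_pos c d hw g y).ne'

/-- Workhorse integrability: Gaussian bump times a function of at most cubic growth. -/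
lemma integrable_gauss_mul {h : ℝ → ℝ} (hh : AEStronglyMeasurable h volume) {C m M : ℝ}
    (hm : |m| ≤ M)
    (hq : ∀ y, |h y| ≤ C * ((1 + y ^ 2) * (1 + |y|))) :
    Integrable (fun y => gφ (y - m) * h y) := by
  refine integrable_poly_gauss
    ((continuous_gφ.comp (continuous_id.sub continuous_const)).aestronglyMeasurable.mul hh)
    (c0 * C) M fun y => ?_
  have h1 : |gφ (y - m) * h y| = gφ (y - m) * |h y| := by
    rw [abs_mul, abs_of_pos (gφ_pos _)]
  rw [h1]
  have h2 := gφ_sub_le hm y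
  have h3 := hq y
  have hgp := (gφ_pos (y - m)).le
  have habs := abs_nonneg (h y)
  calc gφ (y - m) * |h y|
      ≤ (c0 * Real.exp (M * |y| - y ^ 2 / 4)) * (C * ((1 + y ^ 2) * (1 + |y|))) := by
        exact mul_le_mul h2 h3 habs (mul_nonneg c0_pos.le (Real.exp_pos _).le)
    _ = c0 * C * (1 + y ^ 2) * ((1 + |y|) * Real.exp (M * |y| - y ^ 2 / 4)) := by ring

/-- Variant with a quadratic bound. -/
lemma integrable_gauss_mul_quad {h : ℝ → ℝ} (hh : AEStronglyMeasurable h volume) {C m M : ℝ}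
    (hm : |m| ≤ M)
    (hq : ∀ y, |h y| ≤ C * (1 + y ^ 2)) :
    Integrable (fun y => gφ (y - m) * h y) := by
  have hC : 0 ≤ C := by
    have := (abs_nonneg (h 0)).trans (hq 0)
    nlinarith
  refine integrable_gauss_mul hh hm (C := C) fun y => (hq y).trans ?_
  have h1 : (1:ℝ) ≤ 1 + |y| := by simp [abs_nonneg]
  nlinarith [sq_nonneg y, abs_nonneg y, mul_nonneg hC (sq_nonneg y)]

/-- Numerator of the conditional-mean of the component mean. -/
noncomputable def mhn (w c d : ι → ℝ) (g y : ℝ) : ℝ :=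
  ∑ k, w k * (mm c d g k * gφ (y - mm c d g k))

/-- Conditional mean of the component mean given `y`. -/
noncomputable def mh (w c d : ι → ℝ) (g y : ℝ) : ℝ := mhn w c d g y / pf w c d g y

lemma mh_abs_le [Nonempty ι] {w : ι → ℝ} {c d : ι → ℝ} (hw : ∀ i, 0 < w i)
    {g G : ℝ} (hg : |g| ≤ G) (y : ℝ) : |mh w c d g y| ≤ Mb c d G := by
  have hp := pf_pos c d hw g y
  have hnum : |mhn w c d g y| ≤ Mb c d G * pf w c d g y := by
    refine (Finset.abs_sum_le_sum_abs _ _).trans ?_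
    unfold pf
    rw [Finset.mul_sum]
    apply Finset.sum_le_sum
    intro i _
    rw [abs_mul, abs_mul, abs_of_pos (hw i), abs_of_pos (gφ_pos _)]
    have := mm_abs_le c d hg i
    calc w i * (|mm c d g i| * gφ (y - mm c d g i))
        ≤ w i * (Mb c d G * gφ (y - mm c d g i)) := by
          apply mul_le_mul_of_nonneg_left _ (hw i).le
          exact mul_le_mul_of_nonneg_right this (gφ_pos _).le
      _ = Mb c d G * (w i * gφ (y - mm c d g i)) := by ring
  unfold mh
  rw [abs_div, abs_of_pos hp, div_le_iff₀ hp]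
  exact hnum

lemma pfd_div_pf [Nonempty ι] {w : ι → ℝ} (c d : ι → ℝ) (hw : ∀ i, 0 < w i) (g y : ℝ) :
    pfd w c d g y / pf w c d g y = mh w c d g y - y := by
  have hp := (pf_pos c d hw g y).ne'
  have hnum : pfd w c d g y = mhn w c d g y - y * pf w c d g y := by
    unfold pfd mhn pf
    rw [Finset.mul_sum, ← Finset.sum_sub_distrib]
    apply Finset.sum_congr rfl
    intro i _
    ring
  unfold mh
  rw [hnum]
  field_simp

lemma integrable_shift_mul {h : ℝ → ℝ} (hh : AEStronglyMeasurable h volume) {C m M : ℝ}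
    (hm : |m| ≤ M) (hM : 0 ≤ M) (hq : ∀ y, |h y| ≤ C * (1 + y ^ 2)) :
    Integrable (fun y => (y - m) * gφ (y - m) * h y) := by
  have : (fun y => (y - m) * gφ (y - m) * h y) = fun y => gφ (y - m) * ((y - m) * h y) := by
    funext y; ring
  rw [this]
  refine integrable_gauss_mul
    (((continuous_id.sub continuous_const).aestronglyMeasurable).mul hh) hm
    (C := (1 + M) * C) fun y => ?_
  simp only [Pi.mul_apply, id_eq]
  have h1 : |y - m| ≤ (1 + M) * (1 + |y|) := by
    have := abs_sub y m
    have h2 : |y - m| ≤ |y| + M := by linarith [abs_sub y m, hm]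
    nlinarith [abs_nonneg y]
  rw [abs_mul]
  have hC : 0 ≤ C := by
    have := (abs_nonneg (h 0)).trans (hq 0)
    nlinarith
  calc |y - m| * |h y| ≤ ((1 + M) * (1 + |y|)) * (C * (1 + y ^ 2)) := by
        exact mul_le_mul h1 (hq y) (abs_nonneg _) (by positivity)
    _ = (1 + M) * C * ((1 + y ^ 2) * (1 + |y|)) := by ring

/-- Odd first moment: `∫ (y-m) φ(y-m) dy = 0`. -/
lemma O1 (m : ℝ) : ∫ y : ℝ, (y - m) * gφ (y - m) = 0 := by
  have hderiv : ∀ y : ℝ, HasDerivAt (fun y => -gφ (y - m)) ((y - m) * gφ (y - m)) y := by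
    intro y
    exact ((hasDerivAt_gφ_sub m y).neg).congr_deriv (by ring)
  have hm : |m| ≤ |m| := le_refl _
  have hint : Integrable (fun y : ℝ => (y - m) * gφ (y - m)) := by
    have := integrable_shift_mul (h := fun _ => (1:ℝ)) aestronglyMeasurable_const hm
      (abs_nonneg m) (C := 1) (fun y => by simp; nlinarith [sq_nonneg y])
    simpa using this
  have hintf : Integrable (fun y : ℝ => -gφ (y - m)) := by
    have := integrable_gauss_mul (h := fun _ => (-1:ℝ)) aestronglyMeasurable_const hm
      (C := 1) (fun y => by simp; nlinarith [sq_nonneg y, abs_nonneg y])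
    simpa [mul_comm] using this
  exact integral_eq_zero_of_hasDerivAt_of_integrable hderiv hint hintf

/-- Odd moment against `log φ`: `∫ (y-m) φ(y-m) log φ(y-m) dy = 0`. -/
lemma O2 (m : ℝ) :
    ∫ y : ℝ, (y - m) * gφ (y - m) * Real.log (gφ (y - m)) = 0 := by
  set A : ℝ → ℝ := fun y => (1 - Real.log c0 + (y - m) ^ 2 / 2) * gφ (y - m) with hA
  have hderiv : ∀ y : ℝ,
      HasDerivAt A ((y - m) * gφ (y - m) * Real.log (gφ (y - m))) y := by
    intro y
    have h1 : HasDerivAt (fun y : ℝ => 1 - Real.log c0 + (y - m) ^ 2 / 2) (y - m) y := by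
      have hs : HasDerivAt (fun y : ℝ => y - m) 1 y := (hasDerivAt_id y).sub_const m
      have := ((hs.pow 2).div_const 2).const_add (1 - Real.log c0)
      simpa using this.congr_deriv (by ring)
    have := h1.mul (hasDerivAt_gφ_sub m y)
    refine this.congr_deriv ?_
    rw [log_gφ]
    ring
  have hm : |m| ≤ |m| := le_refl _
  have hint : Integrable (fun y : ℝ => (y - m) * gφ (y - m) * Real.log (gφ (y - m))) := by
    refine integrable_shift_mul ?_ hm (abs_nonneg m)
      (C := |Real.log c0| + (1 + |m|) ^ 2) fun y => ?_
    · exact ((continuous_gφ.comp (continuous_id.sub continuous_const)).log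
        (fun y => (gφ_pos _).ne')).aestronglyMeasurable
    · have := abs_log_gφ_le (y := y) hm
      nlinarith [sq_nonneg y, abs_nonneg (Real.log c0), sq_nonneg (1 + |m|),
        sq_nonneg ((1+|m|) * y)]
  have hintA : Integrable A := by
    rw [hA]
    have : (fun y => (1 - Real.log c0 + (y - m) ^ 2 / 2) * gφ (y - m)) =
        (fun y => gφ (y - m) * (1 - Real.log c0 + (y - m) ^ 2 / 2)) := by
      funext y; ring
    rw [this]
    refine integrable_gauss_mul_quad ?_ hm
      (C := 1 + |Real.log c0| + m ^ 2) fun y => ?_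
    · exact (Continuous.aestronglyMeasurable (by continuity))
    · have h3 : (y - m) ^ 2 ≤ 2 * y ^ 2 + 2 * m ^ 2 := by nlinarith [sq_nonneg (y + m)]
      refine (abs_le.2 ⟨?_, ?_⟩) <;>
        nlinarith [abs_nonneg (Real.log c0), neg_abs_le (Real.log c0),
          le_abs_self (Real.log c0), sq_nonneg y, sq_nonneg m, sq_nonneg (y - m),
          mul_nonneg (sq_nonneg m) (sq_nonneg y)]
  exact integral_eq_zero_of_hasDerivAt_of_integrable hderiv hint hintA

lemma continuous_mh [Nonempty ι] {w : ι → ℝ} (c d : ι → ℝ) (hw : ∀ i, 0 < w i) (g : ℝ) :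
    Continuous (fun y => mh w c d g y) := by
  unfold mh mhn
  exact Continuous.div
    (continuous_finset_sum _ fun i _ => continuous_const.mul
      (continuous_const.mul (continuous_gφ.comp (continuous_id.sub continuous_const))))
    (continuous_pf w c d g) (fun y => (pf_pos c d hw g y).ne')

lemma abs_mh_sub_le [Nonempty ι] {w : ι → ℝ} {c d : ι → ℝ} (hw : ∀ i, 0 < w i)
    {g G : ℝ} (hg : |g| ≤ G) (y : ℝ) :
    |mh w c d g y - y| ≤ (Mb c d G + 1) * (1 + y ^ 2) := by
  have h1 := mh_abs_le (c := c) (d := d) hw hg y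
  have h2 : |mh w c d g y - y| ≤ Mb c d G + |y| := by
    calc |mh w c d g y - y| ≤ |mh w c d g y| + |y| := abs_sub _ _
      _ ≤ Mb c d G + |y| := by linarith
  have h3 : |y| ≤ 1 + y ^ 2 := by nlinarith [sq_nonneg (|y| - 1), sq_abs y, abs_nonneg y]
  have hM : 0 ≤ Mb c d G := (abs_nonneg _).trans (mm_abs_le c d hg (Classical.arbitrary ι))
  nlinarith [sq_nonneg y, abs_nonneg y]

/-- Integration by parts: `∫ (y-mᵢ) φ(y-mᵢ) log p = ∫ φ(y-mᵢ)(m̂ - y)`. -/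
lemma IBP [Nonempty ι] {w c d : ι → ℝ} (hw : ∀ i, 0 < w i) (hw1 : ∑ i, w i = 1)
    (g : ℝ) (i : ι) :
    ∫ y : ℝ, (y - mm c d g i) * gφ (y - mm c d g i) * Real.log (pf w c d g y)
      = ∫ y : ℝ, gφ (y - mm c d g i) * (mh w c d g y - y) := by
  set m := mm c d g i with hm_def
  set M := Mb c d |g| with hM_def
  have hm : |m| ≤ M := mm_abs_le c d (le_refl _) i
  have hM : 0 ≤ M := (abs_nonneg m).trans hm
  set u : ℝ → ℝ := fun y => gφ (y - m) with hu_def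
  set u' : ℝ → ℝ := fun y => -(y - m) * gφ (y - m) with hu'_def
  set v : ℝ → ℝ := fun y => Real.log (pf w c d g y) with hv_def
  set v' : ℝ → ℝ := fun y => pfd w c d g y / pf w c d g y with hv'_def
  have hu : ∀ y, HasDerivAt u (u' y) y := fun y => hasDerivAt_gφ_sub m y
  have hv : ∀ y, HasDerivAt v (v' y) y := fun y =>
    (hasDerivAt_pf_y w c d g y).log (pf_pos c d hw g y).ne'
  have hlogq : ∀ y, |Real.log (pf w c d g y)| ≤
      (|Real.log (w (Classical.arbitrary ι))| + 2 * |Real.log c0| + (1 + M) ^ 2) *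
        (1 + y ^ 2) := by
    intro y
    refine (abs_log_pf_le hw hw1 (le_refl |g|) y).trans ?_
    have e1 : (1 + M) ^ 2 * (1 + y ^ 2) ≤ (1 + M) ^ 2 * (1 + y ^ 2) := le_refl _
    nlinarith [sq_nonneg y, abs_nonneg (Real.log (w (Classical.arbitrary ι))),
      abs_nonneg (Real.log c0), sq_nonneg (1 + M),
      mul_nonneg (abs_nonneg (Real.log (w (Classical.arbitrary ι)))) (sq_nonneg y),
      mul_nonneg (abs_nonneg (Real.log c0)) (sq_nonneg y)]
  have huv' : Integrable (u * v') := by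
    have he : (u * v') = fun y => gφ (y - m) * (mh w c d g y - y) := by
      funext y
      simp only [Pi.mul_apply, hu_def, hv'_def]
      rw [pfd_div_pf c d hw g y]
    rw [he]
    refine integrable_gauss_mul_quad ?_ hm (C := M + 1) fun y => ?_
    · exact ((continuous_mh c d hw g).sub continuous_id).aestronglyMeasurable
    · exact abs_mh_sub_le hw (le_refl _) y
  have hu'v : Integrable (u' * v) := by
    have he : (u' * v) = fun y => -((y - m) * gφ (y - m) * Real.log (pf w c d g y)) := by
      funext y
      simp only [Pi.mul_apply, hu'_def, hv_def]
      ring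
    rw [he]
    refine Integrable.neg ?_
    exact integrable_shift_mul ((continuous_log_pf c d hw g).aestronglyMeasurable) hm hM hlogq
  have huv : Integrable (u * v) := by
    have he : (u * v) = fun y => gφ (y - m) * Real.log (pf w c d g y) := by
      funext y
      simp only [Pi.mul_apply, hu_def, hv_def]
    rw [he]
    exact integrable_gauss_mul_quad ((continuous_log_pf c d hw g).aestronglyMeasurable) hm hlogq
  have key := integral_mul_deriv_eq_deriv_mul_of_integrable (fun y _ => hu y) (fun y _ => hv y) huv' hu'v huv
  have e1 : ∫ y : ℝ, u y * v' y = ∫ y : ℝ, gφ (y - m) * (mh w c d g y - y) := by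
    apply integral_congr_ae
    filter_upwards with y
    simp only [hu_def, hv'_def]
    rw [pfd_div_pf c d hw g y]
  have e2 : ∫ y : ℝ, u' y * v y
      = -∫ y : ℝ, (y - m) * gφ (y - m) * Real.log (pf w c d g y) := by
    rw [← integral_neg]
    apply integral_congr_ae
    filter_upwards with y
    simp only [hu'_def, hv_def]
    ring
  rw [e1, e2] at key
  linarith [key]

/-- The integrand of the (negated, up-to-constant) entropy, in closed form. -/
noncomputable def Ff (w c d : ι → ℝ) (g y : ℝ) : ℝ :=
  (∑ i, w i * (gφ (y - mm c d g i) * Real.log (gφ (y - mm c d g i)))) -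
    pf w c d g y * Real.log (pf w c d g y)

/-- Its `g`-derivative. -/
noncomputable def Ff' (w c d : ι → ℝ) (g y : ℝ) : ℝ :=
  ∑ i, w i * (d i * ((y - mm c d g i) * gφ (y - mm c d g i) *
    (Real.log (gφ (y - mm c d g i)) - Real.log (pf w c d g y))))

/-- `g`-derivative of `pf`. -/
noncomputable def pfg (w c d : ι → ℝ) (g y : ℝ) : ℝ :=
  ∑ i, w i * (d i * ((y - mm c d g i) * gφ (y - mm c d g i)))

lemma hasDerivAt_pf_g (w c d : ι → ℝ) (g y : ℝ) :
    HasDerivAt (fun g => pf w c d g y) (pfg w c d g y) g := by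
  unfold pf pfg
  exact HasDerivAt.fun_sum fun i _ => (hasDerivAt_gφ_mm c d i g y).const_mul (w i)

lemma hasDerivAt_Ff [Nonempty ι] {w : ι → ℝ} (c d : ι → ℝ) (hw : ∀ i, 0 < w i)
    (g y : ℝ) : HasDerivAt (fun g => Ff w c d g y) (Ff' w c d g y) g := by
  have hterm : ∀ i : ι, HasDerivAt
      (fun g => w i * (gφ (y - mm c d g i) * Real.log (gφ (y - mm c d g i))))
      (w i * ((Real.log (gφ (y - mm c d g i)) + 1) *
        (d i * ((y - mm c d g i) * gφ (y - mm c d g i))))) g := by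
    intro i
    have hψ := hasDerivAt_gφ_mm c d i g y
    have hlog : HasDerivAt (fun g => Real.log (gφ (y - mm c d g i)))
        ((d i * ((y - mm c d g i) * gφ (y - mm c d g i))) / gφ (y - mm c d g i)) g :=
      hψ.log (gφ_pos _).ne'
    have := (hψ.mul hlog).const_mul (w i)
    refine this.congr_deriv ?_
    have hne := (gφ_pos (y - mm c d g i)).ne'
    rw [mul_comm (gφ (y - mm c d g i)), div_mul_cancel₀ _ hne]
    ring
  have h1 : HasDerivAt (fun g => ∑ i, w i * (gφ (y - mm c d g i) *
      Real.log (gφ (y - mm c d g i))))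
      (∑ i, w i * ((Real.log (gφ (y - mm c d g i)) + 1) *
        (d i * ((y - mm c d g i) * gφ (y - mm c d g i))))) g :=
    HasDerivAt.fun_sum fun i _ => hterm i
  have h2 : HasDerivAt (fun g => pf w c d g y * Real.log (pf w c d g y))
      ((Real.log (pf w c d g y) + 1) * pfg w c d g y) g := by
    have hp := hasDerivAt_pf_g w c d g y
    have hppos := pf_pos c d hw g y
    have hlog : HasDerivAt (fun g => Real.log (pf w c d g y))
        (pfg w c d g y / pf w c d g y) g := hp.log hppos.ne'
    have := hp.mul hlog
    refine this.congr_deriv ?_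
    rw [mul_comm (pf w c d g y), div_mul_cancel₀ _ hppos.ne']
    ring
  have := h1.sub h2
  refine this.congr_deriv ?_
  unfold Ff' pfg
  rw [Finset.mul_sum, ← Finset.sum_sub_distrib]
  apply Finset.sum_congr rfl
  intro i _
  ring

lemma abs_Ff'_le [Nonempty ι] {w c d : ι → ℝ} (hw : ∀ i, 0 < w i) (hw1 : ∑ i, w i = 1)
    {g G : ℝ} (hg : |g| ≤ G) (y : ℝ) :
    |Ff' w c d g y| ≤
      ((∑ i, w i * |d i|) * ((1 + Mb c d G) * (c0 *
        (|Real.log (w (Classical.arbitrary ι))| + 3 * |Real.log c0| +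
          2 * (1 + Mb c d G) ^ 2)))) *
        ((1 + y ^ 2) * ((1 + |y|) * Real.exp (Mb c d G * |y| - y ^ 2 / 4))) := by
  set M := Mb c d G with hM_def
  have hM : 0 ≤ M := Mb_nonneg c d ((abs_nonneg g).trans hg)
  set L : ℝ := |Real.log (w (Classical.arbitrary ι))| + 3 * |Real.log c0| + 2 * (1 + M) ^ 2
    with hL_def
  have hL : 0 ≤ L := by positivity
  set E : ℝ := Real.exp (M * |y| - y ^ 2 / 4) with hE_def
  have hE : 0 < E := Real.exp_pos _
  have hterm : ∀ i : ι, |d i * ((y - mm c d g i) * gφ (y - mm c d g i) *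
      (Real.log (gφ (y - mm c d g i)) - Real.log (pf w c d g y)))| ≤
      |d i| * ((1 + M) * (c0 * L)) * ((1 + y ^ 2) * ((1 + |y|) * E)) := by
    intro i
    have hm := mm_abs_le c d hg i
    have h1 : |y - mm c d g i| ≤ (1 + M) * (1 + |y|) := by
      have h2 : |y - mm c d g i| ≤ |y| + M := by linarith [abs_sub y (mm c d g i), hm]
      nlinarith [abs_nonneg y]
    have h3 : gφ (y - mm c d g i) ≤ c0 * E := gφ_sub_le hm y
    have h4 : |Real.log (gφ (y - mm c d g i)) - Real.log (pf w c d g y)| ≤ L * (1 + y ^ 2) := by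
      have h5 := abs_log_gφ_le (y := y) hm
      have h6 := abs_log_pf_le (c := c) (d := d) hw hw1 hg y
      have h7 := abs_sub (Real.log (gφ (y - mm c d g i))) (Real.log (pf w c d g y))
      rw [hL_def]
      have h8 : (1:ℝ) ≤ 1 + y ^ 2 := by nlinarith [sq_nonneg y]
      nlinarith [abs_nonneg (Real.log (w (Classical.arbitrary ι))),
        abs_nonneg (Real.log c0), sq_nonneg y,
        mul_nonneg (abs_nonneg (Real.log (w (Classical.arbitrary ι)))) (sq_nonneg y),
        mul_nonneg (abs_nonneg (Real.log c0)) (sq_nonneg y)]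
    rw [abs_mul, abs_mul, abs_mul]
    rw [abs_of_pos (gφ_pos _)]
    calc |d i| * (|y - mm c d g i| * gφ (y - mm c d g i) *
          |Real.log (gφ (y - mm c d g i)) - Real.log (pf w c d g y)|)
        ≤ |d i| * (((1 + M) * (1 + |y|)) * (c0 * E) * (L * (1 + y ^ 2))) := by
          apply mul_le_mul_of_nonneg_left _ (abs_nonneg (d i))
          apply mul_le_mul _ h4 (abs_nonneg _)
            (mul_nonneg (by positivity) (mul_nonneg c0_pos.le hE.le))
          exact mul_le_mul h1 h3 (gφ_pos _).le (by positivity)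
      _ = |d i| * ((1 + M) * (c0 * L)) * ((1 + y ^ 2) * ((1 + |y|) * E)) := by ring
  unfold Ff'
  refine (Finset.abs_sum_le_sum_abs _ _).trans ?_
  calc ∑ i, |w i * (d i * ((y - mm c d g i) * gφ (y - mm c d g i) *
        (Real.log (gφ (y - mm c d g i)) - Real.log (pf w c d g y))))|
      ≤ ∑ i, w i * (|d i| * ((1 + M) * (c0 * L)) * ((1 + y ^ 2) * ((1 + |y|) * E))) := by
        apply Finset.sum_le_sum
        intro i _
        rw [abs_mul, abs_of_pos (hw i)]
        exact mul_le_mul_of_nonneg_left (hterm i) (hw i).le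
    _ = ((∑ i, w i * |d i|) * ((1 + M) * (c0 * L))) *
        ((1 + y ^ 2) * ((1 + |y|) * E)) := by
        rw [Finset.sum_mul, Finset.sum_mul]
        exact Finset.sum_congr rfl fun i _ => by ring
    _ = _ := by rw [hL_def, hM_def, hE_def]

lemma abs_logdiff_le [Nonempty ι] {w c d : ι → ℝ} (hw : ∀ i, 0 < w i)
    (hw1 : ∑ i, w i = 1) {g G : ℝ} (hg : |g| ≤ G) (i : ι) (y : ℝ) :
    |Real.log (gφ (y - mm c d g i)) - Real.log (pf w c d g y)| ≤
      (|Real.log (w (Classical.arbitrary ι))| + 3 * |Real.log c0| +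
        2 * (1 + Mb c d G) ^ 2) * (1 + y ^ 2) := by
  set M := Mb c d G with hM_def
  have h5 := abs_log_gφ_le (y := y) (mm_abs_le c d hg i)
  have h6 := abs_log_pf_le (c := c) (d := d) hw hw1 hg y
  have h7 := abs_sub (Real.log (gφ (y - mm c d g i))) (Real.log (pf w c d g y))
  have h8 : (1:ℝ) ≤ 1 + y ^ 2 := by nlinarith [sq_nonneg y]
  nlinarith [abs_nonneg (Real.log (w (Classical.arbitrary ι))),
    abs_nonneg (Real.log c0), sq_nonneg y,
    mul_nonneg (abs_nonneg (Real.log (w (Classical.arbitrary ι)))) (sq_nonneg y),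
    mul_nonneg (abs_nonneg (Real.log c0)) (sq_nonneg y)]

lemma continuous_Ff [Nonempty ι] {w : ι → ℝ} (c d : ι → ℝ) (hw : ∀ i, 0 < w i) (g : ℝ) :
    Continuous (fun y => Ff w c d g y) := by
  unfold Ff
  apply Continuous.sub
  · apply continuous_finset_sum
    intro i _
    apply Continuous.mul continuous_const
    apply Continuous.mul
    · exact continuous_gφ.comp (continuous_id.sub continuous_const)
    · exact (continuous_gφ.comp (continuous_id.sub continuous_const)).log
        fun y => (gφ_pos _).ne'
  · exact (continuous_pf w c d g).mul (continuous_log_pf c d hw g)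

lemma continuous_Ff' [Nonempty ι] {w : ι → ℝ} (c d : ι → ℝ) (hw : ∀ i, 0 < w i) (g : ℝ) :
    Continuous (fun y => Ff' w c d g y) := by
  unfold Ff'
  apply continuous_finset_sum
  intro i _
  apply Continuous.mul continuous_const
  apply Continuous.mul continuous_const
  apply Continuous.mul
  · exact (continuous_id.sub continuous_const).mul
      (continuous_gφ.comp (continuous_id.sub continuous_const))
  · exact ((continuous_gφ.comp (continuous_id.sub continuous_const)).log
      fun y => (gφ_pos _).ne').sub (continuous_log_pf c d hw g)

/-- `Ff` as a single finite sum. -/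
lemma Ff_eq_sum [Nonempty ι] {w : ι → ℝ} (c d : ι → ℝ) (hw : ∀ i, 0 < w i) (g y : ℝ) :
    Ff w c d g y = ∑ i, gφ (y - mm c d g i) *
      (w i * (Real.log (gφ (y - mm c d g i)) - Real.log (pf w c d g y))) := by
  unfold Ff
  rw [show pf w c d g y * Real.log (pf w c d g y)
      = ∑ i, (w i * gφ (y - mm c d g i)) * Real.log (pf w c d g y) by
    rw [← Finset.sum_mul]; rfl]
  rw [← Finset.sum_sub_distrib]
  exact Finset.sum_congr rfl fun i _ => by ring

lemma integrable_Ff [Nonempty ι] {w c d : ι → ℝ} (hw : ∀ i, 0 < w i)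
    (hw1 : ∑ i, w i = 1) (g : ℝ) : Integrable (fun y => Ff w c d g y) := by
  have he : (fun y => Ff w c d g y) = fun y => ∑ i, gφ (y - mm c d g i) *
      (w i * (Real.log (gφ (y - mm c d g i)) - Real.log (pf w c d g y))) := by
    funext y; exact Ff_eq_sum c d hw g y
  rw [he]
  apply integrable_finset_sum
  intro i _
  refine integrable_gauss_mul_quad ?_ (mm_abs_le c d (le_refl |g|) i)
    (C := w i * (|Real.log (w (Classical.arbitrary ι))| + 3 * |Real.log c0| +
      2 * (1 + Mb c d |g|) ^ 2)) fun y => ?_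
  · apply Continuous.aestronglyMeasurable
    apply Continuous.mul continuous_const
    exact (((continuous_gφ.comp (continuous_id.sub continuous_const)).log
      fun y => (gφ_pos _).ne').sub (continuous_log_pf c d hw g))
  · rw [abs_mul, abs_of_pos (hw i), mul_assoc]
    exact mul_le_mul_of_nonneg_left (abs_logdiff_le hw hw1 (le_refl |g|) i y) (hw i).le

/-- Integrability of the summands of `Ff'` (at a fixed `g`). -/
lemma integrable_Ff'_term [Nonempty ι] {w c d : ι → ℝ} (hw : ∀ i, 0 < w i)
    (hw1 : ∑ i, w i = 1) (g : ℝ) (i : ι) :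
    Integrable (fun y => w i * (d i * ((y - mm c d g i) * gφ (y - mm c d g i) *
      (Real.log (gφ (y - mm c d g i)) - Real.log (pf w c d g y))))) := by
  have he : (fun y => w i * (d i * ((y - mm c d g i) * gφ (y - mm c d g i) *
      (Real.log (gφ (y - mm c d g i)) - Real.log (pf w c d g y))))) =
      fun y => (y - mm c d g i) * gφ (y - mm c d g i) *
        ((w i * d i) * (Real.log (gφ (y - mm c d g i)) - Real.log (pf w c d g y))) := by
    funext y; ring
  rw [he]
  refine integrable_shift_mul ?_ (mm_abs_le c d (le_refl |g|) i)
    (Mb_nonneg c d (abs_nonneg g))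
    (C := |w i * d i| * (|Real.log (w (Classical.arbitrary ι))| + 3 * |Real.log c0| +
      2 * (1 + Mb c d |g|) ^ 2)) fun y => ?_
  · apply Continuous.aestronglyMeasurable
    apply Continuous.mul continuous_const
    exact (((continuous_gφ.comp (continuous_id.sub continuous_const)).log
      fun y => (gφ_pos _).ne').sub (continuous_log_pf c d hw g))
  · rw [abs_mul, mul_assoc]
    exact mul_le_mul_of_nonneg_left (abs_logdiff_le hw hw1 (le_refl |g|) i y) (abs_nonneg _)

/-- The value of the integral of each summand of `Ff'`. -/
lemma integral_Ff'_term [Nonempty ι] {w c d : ι → ℝ} (hw : ∀ i, 0 < w i)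
    (hw1 : ∑ i, w i = 1) (g : ℝ) (i : ι) :
    ∫ y : ℝ, w i * (d i * ((y - mm c d g i) * gφ (y - mm c d g i) *
      (Real.log (gφ (y - mm c d g i)) - Real.log (pf w c d g y))))
    = ∫ y : ℝ, w i * (d i * (gφ (y - mm c d g i) * (mm c d g i - mh w c d g y))) := by
  set m := mm c d g i with hm_def
  have hm : |m| ≤ Mb c d |g| := mm_abs_le c d (le_refl |g|) i
  have hM : 0 ≤ Mb c d |g| := Mb_nonneg c d (abs_nonneg g)
  have hcψ : Continuous fun y : ℝ => gφ (y - m) :=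
    continuous_gφ.comp (continuous_id.sub continuous_const)
  have hint1 : Integrable (fun y : ℝ => (y - m) * gφ (y - m) *
      Real.log (gφ (y - m))) := by
    refine integrable_shift_mul (h := fun y => Real.log (gφ (y - m)))
      ((hcψ.log fun y => (gφ_pos _).ne').aestronglyMeasurable)
      hm hM (C := |Real.log c0| + (1 + Mb c d |g|) ^ 2) fun y => ?_
    refine (abs_log_gφ_le hm).trans ?_
    nlinarith [abs_nonneg (Real.log c0), sq_nonneg y]
  have hint2 : Integrable (fun y : ℝ => (y - m) * gφ (y - m) *
      Real.log (pf w c d g y)) := by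
    refine integrable_shift_mul ((continuous_log_pf c d hw g).aestronglyMeasurable)
      hm hM (C := |Real.log (w (Classical.arbitrary ι))| + 2 * |Real.log c0| +
        (1 + Mb c d |g|) ^ 2) fun y => ?_
    refine (abs_log_pf_le (c := c) (d := d) hw hw1 (le_refl |g|) y).trans ?_
    nlinarith [abs_nonneg (Real.log (w (Classical.arbitrary ι))),
      abs_nonneg (Real.log c0), sq_nonneg y]
  have step1 : ∫ y : ℝ, w i * (d i * ((y - m) * gφ (y - m) *
      (Real.log (gφ (y - m)) - Real.log (pf w c d g y))))
      = (w i * d i) * ((∫ y : ℝ, (y - m) * gφ (y - m) * Real.log (gφ (y - m)))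
        - ∫ y : ℝ, (y - m) * gφ (y - m) * Real.log (pf w c d g y)) := by
    rw [← integral_sub hint1 hint2, ← integral_const_mul]
    apply integral_congr_ae
    filter_upwards with y
    ring
  rw [step1, O2 m, IBP hw hw1 g i, ← hm_def]
  have hint3 : Integrable (fun y : ℝ => gφ (y - m) * (mh w c d g y - m)) := by
    refine integrable_gauss_mul_quad
      (((continuous_mh c d hw g).sub continuous_const).aestronglyMeasurable) hm
      (C := 2 * Mb c d |g|) fun y => ?_
    have h1 := mh_abs_le (c := c) (d := d) hw (le_refl |g|) y
    have h2 : |mh w c d g y - m| ≤ 2 * Mb c d |g| := by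
      calc |mh w c d g y - m| ≤ |mh w c d g y| + |m| := abs_sub _ _
        _ ≤ 2 * Mb c d |g| := by linarith
    change |mh w c d g y - m| ≤ 2 * Mb c d |g| * (1 + y ^ 2)
    nlinarith [sq_nonneg y, abs_nonneg (mh w c d g y - m)]
  have hint4 : Integrable (fun y : ℝ => gφ (y - m) * (m - y)) := by
    have he : (fun y : ℝ => gφ (y - m) * (m - y)) =
        fun y : ℝ => -((y - m) * gφ (y - m) * (1:ℝ)) := by
      funext y; ring
    rw [he]
    refine Integrable.neg ?_
    exact integrable_shift_mul aestronglyMeasurable_const hm hM (C := 1)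
      (fun y => by simp; nlinarith [sq_nonneg y])
  have split : ∫ y : ℝ, gφ (y - m) * (mh w c d g y - y)
      = (∫ y : ℝ, gφ (y - m) * (mh w c d g y - m)) + ∫ y : ℝ, gφ (y - m) * (m - y) := by
    rw [← integral_add hint3 hint4]
    apply integral_congr_ae
    filter_upwards with y
    ring
  have hO1' : ∫ y : ℝ, gφ (y - m) * (m - y) = 0 := by
    rw [show (fun y : ℝ => gφ (y - m) * (m - y)) = fun y : ℝ => -((y - m) * gφ (y - m)) by
      funext y; ring, integral_neg, O1 m, neg_zero]
  rw [split, hO1', add_zero, zero_sub, ← integral_neg, ← integral_const_mul]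
  apply integral_congr_ae
  filter_upwards with y
  ring

/-- **Key differentiation lemma**: derivative of the mutual-information-type integral. -/
theorem key [Nonempty ι] (w c d : ι → ℝ) (hw : ∀ i, 0 < w i) (hw1 : ∑ i, w i = 1)
    (g₀ : ℝ) :
    HasDerivAt (fun g => ∫ y : ℝ, Ff w c d g y)
      (∫ y : ℝ, ∑ i, w i * (d i * (gφ (y - mm c d g₀ i) * (mm c d g₀ i - mh w c d g₀ y))))
      g₀ := by
  set G := |g₀| + 1 with hG_def
  set K := ((∑ i, w i * |d i|) * ((1 + Mb c d G) * (c0 *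
      (|Real.log (w (Classical.arbitrary ι))| + 3 * |Real.log c0| +
        2 * (1 + Mb c d G) ^ 2)))) with hK_def
  set bound : ℝ → ℝ := fun y =>
    K * ((1 + y ^ 2) * ((1 + |y|) * Real.exp (Mb c d G * |y| - y ^ 2 / 4))) with hbound_def
  have hgball : ∀ g ∈ Metric.ball g₀ 1, |g| ≤ G := by
    intro g hg
    rw [Metric.mem_ball, Real.dist_eq] at hg
    rw [hG_def]
    calc |g| = |g₀ + (g - g₀)| := by ring_nf
      _ ≤ |g₀| + |g - g₀| := abs_add_le _ _
      _ ≤ |g₀| + 1 := by linarith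
  have hK : 0 ≤ K := by
    rw [hK_def]
    have h1 : 0 ≤ ∑ i, w i * |d i| :=
      Finset.sum_nonneg fun i _ => mul_nonneg (hw i).le (abs_nonneg _)
    have h2 : 0 ≤ Mb c d G := Mb_nonneg c d (by positivity)
    have := c0_pos
    positivity
  have main := hasDerivAt_integral_of_dominated_loc_of_deriv_le
    (F := fun g y => Ff w c d g y) (F' := fun g y => Ff' w c d g y)
    (x₀ := g₀) (bound := bound) (μ := volume) (Metric.ball_mem_nhds g₀ one_pos)
    (Filter.Eventually.of_forall fun g => (continuous_Ff c d hw g).aestronglyMeasurable)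
    (integrable_Ff hw hw1 g₀)
    ((continuous_Ff' c d hw g₀).aestronglyMeasurable)
    (Filter.Eventually.of_forall fun y => fun g hg => by
      rw [Real.norm_eq_abs]
      exact (abs_Ff'_le hw hw1 (hgball g hg) y).trans (le_of_eq (by rw [hbound_def, hK_def])))
    (by
      refine integrable_poly_gauss ?_ K (Mb c d G) fun y => ?_
      · apply Continuous.aestronglyMeasurable
        rw [hbound_def]
        apply Continuous.mul continuous_const
        apply Continuous.mul (by continuity)
        apply Continuous.mul (by continuity)
        apply Real.continuous_exp.comp
        apply Continuous.sub (continuous_const.mul continuous_abs) (by continuity)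
      · rw [hbound_def]
        have h0 : (0:ℝ) ≤ (1 + y ^ 2) * ((1 + |y|) * Real.exp (Mb c d G * |y| - y ^ 2 / 4)) := by
          positivity
        rw [abs_of_nonneg (mul_nonneg hK h0)]
        rw [← mul_assoc])
    (Filter.Eventually.of_forall fun y => fun g _ => hasDerivAt_Ff c d hw g y)
  obtain ⟨-, hderiv⟩ := main
  refine hderiv.congr_deriv ?_
  have e1 : ∫ y : ℝ, Ff' w c d g₀ y = ∑ i, ∫ y : ℝ, w i * (d i *
      ((y - mm c d g₀ i) * gφ (y - mm c d g₀ i) *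
        (Real.log (gφ (y - mm c d g₀ i)) - Real.log (pf w c d g₀ y)))) := by
    rw [← integral_finset_sum]
    · rfl
    · exact fun i _ => integrable_Ff'_term hw hw1 g₀ i
  have e2 : ∑ i, (∫ y : ℝ, w i * (d i *
      ((y - mm c d g₀ i) * gφ (y - mm c d g₀ i) *
        (Real.log (gφ (y - mm c d g₀ i)) - Real.log (pf w c d g₀ y)))))
      = ∑ i, ∫ y : ℝ, w i * (d i * (gφ (y - mm c d g₀ i) * (mm c d g₀ i - mh w c d g₀ y))) :=
    Finset.sum_congr rfl fun i _ => integral_Ff'_term hw hw1 g₀ i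
  have hint5 : ∀ i : ι, Integrable (fun y : ℝ =>
      w i * (d i * (gφ (y - mm c d g₀ i) * (mm c d g₀ i - mh w c d g₀ y)))) := by
    intro i
    have he : (fun y : ℝ => w i * (d i * (gφ (y - mm c d g₀ i) *
        (mm c d g₀ i - mh w c d g₀ y)))) = fun y : ℝ => gφ (y - mm c d g₀ i) *
          ((w i * d i) * (mm c d g₀ i - mh w c d g₀ y)) := by
      funext y; ring
    rw [he]
    refine integrable_gauss_mul_quad
      ((continuous_const.mul ((continuous_const.sub
        (continuous_mh c d hw g₀)))).aestronglyMeasurable)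
      (mm_abs_le c d (le_refl |g₀|) i)
      (C := |w i * d i| * (2 * Mb c d |g₀|)) fun y => ?_
    change |w i * d i * (mm c d g₀ i - mh w c d g₀ y)| ≤ _
    rw [abs_mul]
    have h1 := mh_abs_le (c := c) (d := d) hw (le_refl |g₀|) y
    have h2 := mm_abs_le c d (le_refl |g₀|) i
    have h3 : |mm c d g₀ i - mh w c d g₀ y| ≤ 2 * Mb c d |g₀| := by
      calc |mm c d g₀ i - mh w c d g₀ y| ≤ |mm c d g₀ i| + |mh w c d g₀ y| := abs_sub _ _
        _ ≤ 2 * Mb c d |g₀| := by linarith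
    have h4 : (1:ℝ) ≤ 1 + y ^ 2 := by nlinarith [sq_nonneg y]
    calc |w i * d i| * |mm c d g₀ i - mh w c d g₀ y|
        ≤ |w i * d i| * (2 * Mb c d |g₀|) := by
          exact mul_le_mul_of_nonneg_left h3 (abs_nonneg _)
      _ ≤ |w i * d i| * (2 * Mb c d |g₀|) * (1 + y ^ 2) := by
          nlinarith [abs_nonneg (w i * d i), mul_nonneg (abs_nonneg (w i * d i))
            (mul_nonneg (by norm_num : (0:ℝ) ≤ 2) (Mb_nonneg c d (abs_nonneg g₀))),
            sq_nonneg y]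
  have e3 : ∑ i, (∫ y : ℝ, w i * (d i * (gφ (y - mm c d g₀ i) *
      (mm c d g₀ i - mh w c d g₀ y))))
      = ∫ y : ℝ, ∑ i, w i * (d i * (gφ (y - mm c d g₀ i) * (mm c d g₀ i - mh w c d g₀ y))) :=
    (integral_finset_sum _ fun i _ => hint5 i).symm
  rw [← e3, ← e2, ← e1]

lemma condmean_abs_le [Nonempty ι] {w : ι → ℝ} {c d : ι → ℝ} (hw : ∀ i, 0 < w i)
    (u : ι → ℝ) (g y : ℝ) :
    |(∑ x, u x * (w x * gφ (y - mm c d g x))) / pf w c d g y| ≤ ∑ x, |u x| := by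
  have hp := pf_pos c d hw g y
  have hnum : |∑ x, u x * (w x * gφ (y - mm c d g x))| ≤ (∑ x, |u x|) * pf w c d g y := by
    refine (Finset.abs_sum_le_sum_abs _ _).trans ?_
    calc ∑ x, |u x * (w x * gφ (y - mm c d g x))|
        ≤ ∑ x, (∑ k, |u k|) * (w x * gφ (y - mm c d g x)) := by
          apply Finset.sum_le_sum
          intro i _
          rw [abs_mul, abs_mul, abs_of_pos (hw i), abs_of_pos (gφ_pos _)]
          exact mul_le_mul_of_nonneg_right
            (Finset.single_le_sum (f := fun x => |u x|) (fun x _ => abs_nonneg _)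
              (Finset.mem_univ i)) (mul_pos (hw i) (gφ_pos _)).le
      _ = (∑ k, |u k|) * pf w c d g y := by rw [← Finset.mul_sum]; rfl
  rw [abs_div, abs_of_pos hp, div_le_iff₀ hp]
  exact hnum

end Mixture

/-- Linear combinations of finite sums. -/
lemma lincomb2 {ι : Type*} [Fintype ι] (f g : ι → ℝ) (r s : ℝ) :
    ∑ x, (r * f x + s * g x) = r * (∑ x, f x) + s * (∑ x, g x) := by
  simp [Finset.sum_add_distrib, Finset.mul_sum]

lemma lincomb3 {ι : Type*} [Fintype ι] (f g h : ι → ℝ) (r s t : ℝ) :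
    ∑ x, (r * f x + s * g x + t * h x)
      = r * (∑ x, f x) + s * (∑ x, g x) + t * (∑ x, h x) := by
  simp [Finset.sum_add_distrib, Finset.mul_sum]

lemma lincomb4 {ι : Type*} [Fintype ι] (f g h k : ι → ℝ) (r s t u : ℝ) :
    ∑ x, (r * f x + s * g x + t * h x + u * k x)
      = r * (∑ x, f x) + s * (∑ x, g x) + t * (∑ x, h x) + u * (∑ x, k x) := by
  simp [Finset.sum_add_distrib, Finset.mul_sum]

/-- Pure finite-sum algebra: the gradient integrand equals the weighted error moments. -/
lemma pointwise_core {ι : Type*} [Fintype ι] (w ψ u₁ u₂ : ι → ℝ) (A B D P : ℝ)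
    (hP : P ≠ 0) (hsum : ∑ x, w x * ψ x = P) :
    ∑ x, w x * (D * u₁ x * (ψ x *
        (A * u₁ x + B * u₂ x - (∑ k, w k * ((A * u₁ k + B * u₂ k) * ψ k)) / P)))
      = (D * A) * (∑ x, w x * ψ x * (u₁ x - (∑ k, u₁ k * (w k * ψ k)) / P) ^ 2)
        + (D * B) * (∑ x, w x * ψ x * ((u₁ x - (∑ k, u₁ k * (w k * ψ k)) / P) *
            (u₂ x - (∑ k, u₂ k * (w k * ψ k)) / P))) := by
  set S₁ := ∑ k, u₁ k * (w k * ψ k) with hS₁d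
  set S₂ := ∑ k, u₂ k * (w k * ψ k) with hS₂d
  set T₁₁ := ∑ x, w x * (u₁ x ^ 2 * ψ x) with hT₁₁d
  set T₁₂ := ∑ x, w x * (u₁ x * u₂ x * ψ x) with hT₁₂d
  have eN : ∑ k, w k * ((A * u₁ k + B * u₂ k) * ψ k) = A * S₁ + B * S₂ := by
    calc ∑ k, w k * ((A * u₁ k + B * u₂ k) * ψ k)
        = ∑ k, (A * (u₁ k * (w k * ψ k)) + B * (u₂ k * (w k * ψ k))) :=
          Finset.sum_congr rfl fun x _ => by ring
      _ = A * (∑ k, u₁ k * (w k * ψ k)) + B * (∑ k, u₂ k * (w k * ψ k)) := lincomb2 _ _ _ _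
      _ = A * S₁ + B * S₂ := by rw [← hS₁d, ← hS₂d]
  have eL : ∑ x, w x * (D * u₁ x * (ψ x * (A * u₁ x + B * u₂ x - (A * S₁ + B * S₂) / P)))
      = (D * A) * T₁₁ + (D * B) * T₁₂ + (-(D * ((A * S₁ + B * S₂) / P))) * S₁ := by
    calc ∑ x, w x * (D * u₁ x * (ψ x * (A * u₁ x + B * u₂ x - (A * S₁ + B * S₂) / P)))
        = ∑ x, ((D * A) * (w x * (u₁ x ^ 2 * ψ x)) + (D * B) * (w x * (u₁ x * u₂ x * ψ x))
            + (-(D * ((A * S₁ + B * S₂) / P))) * (u₁ x * (w x * ψ x))) :=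
          Finset.sum_congr rfl fun x _ => by ring
      _ = _ := by rw [lincomb3, ← hT₁₁d, ← hT₁₂d, ← hS₁d]
  have eR1 : ∑ x, w x * ψ x * (u₁ x - S₁ / P) ^ 2
      = T₁₁ + (-(2 * (S₁ / P))) * S₁ + ((S₁ / P) ^ 2) * P := by
    calc ∑ x, w x * ψ x * (u₁ x - S₁ / P) ^ 2
        = ∑ x, ((1 : ℝ) * (w x * (u₁ x ^ 2 * ψ x)) + (-(2 * (S₁ / P))) * (u₁ x * (w x * ψ x))
            + ((S₁ / P) ^ 2) * (w x * ψ x)) :=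
          Finset.sum_congr rfl fun x _ => by ring
      _ = _ := by rw [lincomb3, ← hT₁₁d, ← hS₁d, hsum, one_mul]
  have eR2 : ∑ x, w x * ψ x * ((u₁ x - S₁ / P) * (u₂ x - S₂ / P))
      = T₁₂ + (-(S₂ / P)) * S₁ + (-(S₁ / P)) * S₂ + ((S₁ / P) * (S₂ / P)) * P := by
    calc ∑ x, w x * ψ x * ((u₁ x - S₁ / P) * (u₂ x - S₂ / P))
        = ∑ x, ((1 : ℝ) * (w x * (u₁ x * u₂ x * ψ x)) + (-(S₂ / P)) * (u₁ x * (w x * ψ x))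
            + (-(S₁ / P)) * (u₂ x * (w x * ψ x)) + ((S₁ / P) * (S₂ / P)) * (w x * ψ x)) :=
          Finset.sum_congr rfl fun x _ => by ring
      _ = _ := by rw [lincomb4, ← hT₁₂d, ← hS₁d, ← hS₂d, hsum, one_mul]
  rw [eN, eL, eR1, eR2]
  field_simp
  ring

end Stmt4Aux

open Stmt4Aux

/-- Paper's Theorem 2 (first gradient formula), real-valued convention: in the two-user scalar
Gaussian MAC with finite-alphabet inputs, for every amplitude `g₁ > 0` the mutual information
is differentiable in `g₁` with `∂I/∂g₁ = snr·(a²·g₁·E₁₁ + a·b·g₂·E₁₂)`. -/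
theorem stmt_4 {ι₁ ι₂ : Type*} [Fintype ι₁] [Fintype ι₂]
    (v₁ : ι₁ → ℝ) (v₂ : ι₂ → ℝ) (p₁ : ι₁ → ℝ) (p₂ : ι₂ → ℝ)
    (hp₁pos : ∀ i, 0 < p₁ i) (hp₁sum : ∑ i, p₁ i = 1)
    (hp₂pos : ∀ j, 0 < p₂ j) (hp₂sum : ∑ j, p₂ j = 1)
    (snr a b g₂ : ℝ) (hsnr : 0 < snr) (hg₂ : 0 ≤ g₂)
    (φ : ℝ → ℝ) (hφ : φ = fun t => (Real.sqrt (2 * Real.pi))⁻¹ * Real.exp (-t ^ 2 / 2))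
    (μv : ℝ → ℝ → ι₁ → ι₂ → ℝ)
    (hμv : μv = fun g₁ g₂ i j => Real.sqrt snr * (a * g₁ * v₁ i + b * g₂ * v₂ j))
    (py : ℝ → ℝ → ℝ → ℝ)
    (hpy : py = fun g₁ g₂ y => ∑ i, ∑ j, p₁ i * p₂ j * φ (y - μv g₁ g₂ i j))
    (I : ℝ → ℝ → ℝ)
    (hI : I = fun g₁ g₂ => ∫ y : ℝ, ∑ i, ∑ j, p₁ i * p₂ j * φ (y - μv g₁ g₂ i j) *
        Real.log (φ (y - μv g₁ g₂ i j) / py g₁ g₂ y))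
    (xhat₁ : ℝ → ℝ → ℝ → ℝ)
    (hxhat₁ : xhat₁ = fun g₁ g₂ y =>
        (∑ i, ∑ j, v₁ i * (p₁ i * p₂ j * φ (y - μv g₁ g₂ i j))) / py g₁ g₂ y)
    (xhat₂ : ℝ → ℝ → ℝ → ℝ)
    (hxhat₂ : xhat₂ = fun g₁ g₂ y =>
        (∑ i, ∑ j, v₂ j * (p₁ i * p₂ j * φ (y - μv g₁ g₂ i j))) / py g₁ g₂ y)
    (E₁₁ : ℝ → ℝ → ℝ)
    (hE₁₁ : E₁₁ = fun g₁ g₂ => ∫ y : ℝ, ∑ i, ∑ j, p₁ i * p₂ j * φ (y - μv g₁ g₂ i j) *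
        (v₁ i - xhat₁ g₁ g₂ y) ^ 2)
    (E₁₂ : ℝ → ℝ → ℝ)
    (hE₁₂ : E₁₂ = fun g₁ g₂ => ∫ y : ℝ, ∑ i, ∑ j, p₁ i * p₂ j * φ (y - μv g₁ g₂ i j) *
        ((v₁ i - xhat₁ g₁ g₂ y) * (v₂ j - xhat₂ g₁ g₂ y))) :
    ∀ g₁ : ℝ, 0 < g₁ →
      HasDerivAt (fun g => I g g₂)
        (snr * (a ^ 2 * g₁ * E₁₁ g₁ g₂ + a * b * g₂ * E₁₂ g₁ g₂)) g₁ := by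
  intro g₁ hg₁
  have hne₁ : Nonempty ι₁ := by
    by_contra h
    rw [not_nonempty_iff] at h
    rw [Finset.univ_eq_empty, Finset.sum_empty] at hp₁sum
    norm_num at hp₁sum
  have hne₂ : Nonempty ι₂ := by
    by_contra h
    rw [not_nonempty_iff] at h
    rw [Finset.univ_eq_empty, Finset.sum_empty] at hp₂sum
    norm_num at hp₂sum
  haveI : Nonempty (ι₁ × ι₂) := ⟨(Classical.arbitrary ι₁, Classical.arbitrary ι₂)⟩
  subst hφ hμv hpy hxhat₁ hxhat₂ hI hE₁₁ hE₁₂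
  have hgφ0 : ∀ t : ℝ, (Real.sqrt (2 * Real.pi))⁻¹ * Real.exp (-t ^ 2 / 2) = gφ t :=
    fun t => rfl
  simp only [hgφ0]
  set s := Real.sqrt snr with hs_def
  have hs : s * s = snr := Real.mul_self_sqrt hsnr.le
  set w : ι₁ × ι₂ → ℝ := fun x => p₁ x.1 * p₂ x.2 with hw_def
  set cc : ι₁ × ι₂ → ℝ := fun x => s * b * g₂ * v₂ x.2 with hcc_def
  set dd : ι₁ × ι₂ → ℝ := fun x => s * a * v₁ x.1 with hdd_def
  have hw : ∀ x, 0 < w x := fun x => mul_pos (hp₁pos _) (hp₂pos _)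
  have hw1 : ∑ x, w x = 1 := by
    rw [Fintype.sum_prod_type]
    calc ∑ i, ∑ j, w (i, j) = ∑ i, p₁ i * ∑ j, p₂ j := by
          apply Finset.sum_congr rfl
          intro i _
          rw [Finset.mul_sum]
      _ = 1 := by rw [hp₂sum]; simpa using hp₁sum
  have hmmeq : ∀ (g : ℝ) (x : ι₁ × ι₂),
      s * (a * g * v₁ x.1 + b * g₂ * v₂ x.2) = mm cc dd g x := by
    intro g x
    rw [show mm cc dd g x = cc x + dd x * g from rfl, hcc_def, hdd_def]
    ring
  have hpfeq : ∀ (g y : ℝ),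
      (∑ i, ∑ j, p₁ i * p₂ j * gφ (y - s * (a * g * v₁ i + b * g₂ * v₂ j)))
        = pf w cc dd g y := by
    intro g y
    rw [show pf w cc dd g y = ∑ x, w x * gφ (y - mm cc dd g x) from rfl,
      Fintype.sum_prod_type]
    apply Finset.sum_congr rfl
    intro i _
    apply Finset.sum_congr rfl
    intro j _
    rw [← hmmeq g (i, j)]
  simp only [hpfeq]
  -- rewrite the function under differentiation into `Ff` form
  have hIfun : (fun g => ∫ y : ℝ, ∑ i, ∑ j, p₁ i * p₂ j *
      gφ (y - s * (a * g * v₁ i + b * g₂ * v₂ j)) *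
        Real.log (gφ (y - s * (a * g * v₁ i + b * g₂ * v₂ j)) / pf w cc dd g y))
      = fun g => ∫ y : ℝ, Ff w cc dd g y := by
    funext g
    apply integral_congr_ae
    filter_upwards with y
    rw [Ff_eq_sum cc dd hw g y, Fintype.sum_prod_type]
    apply Finset.sum_congr rfl
    intro i _
    apply Finset.sum_congr rfl
    intro j _
    rw [← hmmeq g (i, j)]
    rw [Real.log_div (gφ_pos _).ne' (pf_pos cc dd hw g y).ne']
    have : w (i, j) = p₁ i * p₂ j := rfl
    rw [this]
    ring
  rw [hIfun]
  -- auxiliary notation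
  have hmm2 : ∀ x : ι₁ × ι₂, mm cc dd g₁ x
      = s * a * g₁ * v₁ x.1 + s * b * g₂ * v₂ x.2 := by
    intro x
    rw [show mm cc dd g₁ x = cc x + dd x * g₁ from rfl, hcc_def, hdd_def]
    ring
  set X1 : ℝ → ℝ := fun y =>
    (∑ k : ι₁ × ι₂, v₁ k.1 * (w k * gφ (y - mm cc dd g₁ k))) / pf w cc dd g₁ y with hX1_def
  set X2 : ℝ → ℝ := fun y =>
    (∑ k : ι₁ × ι₂, v₂ k.2 * (w k * gφ (y - mm cc dd g₁ k))) / pf w cc dd g₁ y with hX2_def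
  set Af : ℝ → ℝ := fun y => ∑ x : ι₁ × ι₂, w x * gφ (y - mm cc dd g₁ x) *
    (v₁ x.1 - X1 y) ^ 2 with hAf_def
  set Bf : ℝ → ℝ := fun y => ∑ x : ι₁ × ι₂, w x * gφ (y - mm cc dd g₁ x) *
    ((v₁ x.1 - X1 y) * (v₂ x.2 - X2 y)) with hBf_def
  -- pointwise identification of the derivative integrand
  have hcore : ∀ y : ℝ, (∑ x : ι₁ × ι₂, w x * (dd x * (gφ (y - mm cc dd g₁ x) *
      (mm cc dd g₁ x - mh w cc dd g₁ y))))
      = (s * a * (s * a * g₁)) * Af y + (s * a * (s * b * g₂)) * Bf y := by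
    intro y
    have hcore0 := pointwise_core (w := w) (ψ := fun x => gφ (y - mm cc dd g₁ x))
      (u₁ := fun x => v₁ x.1) (u₂ := fun x => v₂ x.2)
      (A := s * a * g₁) (B := s * b * g₂) (D := s * a) (P := pf w cc dd g₁ y)
      (pf_pos cc dd hw g₁ y).ne' rfl
    have hmhN : mh w cc dd g₁ y = (∑ k : ι₁ × ι₂, w k *
        ((s * a * g₁ * v₁ k.1 + s * b * g₂ * v₂ k.2) * gφ (y - mm cc dd g₁ k))) /
          pf w cc dd g₁ y := by
      rw [show mh w cc dd g₁ y = mhn w cc dd g₁ y / pf w cc dd g₁ y from rfl]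
      congr 1
      rw [show mhn w cc dd g₁ y
          = ∑ k : ι₁ × ι₂, w k * (mm cc dd g₁ k * gφ (y - mm cc dd g₁ k)) from rfl]
      apply Finset.sum_congr rfl
      intro k _
      rw [hmm2 k]
    have eL : (∑ x : ι₁ × ι₂, w x * (dd x * (gφ (y - mm cc dd g₁ x) *
        (mm cc dd g₁ x - mh w cc dd g₁ y))))
        = ∑ x : ι₁ × ι₂, w x * (s * a * v₁ x.1 * (gφ (y - mm cc dd g₁ x) *
          (s * a * g₁ * v₁ x.1 + s * b * g₂ * v₂ x.2 -
            (∑ k : ι₁ × ι₂, w k * ((s * a * g₁ * v₁ k.1 + s * b * g₂ * v₂ k.2) *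
              gφ (y - mm cc dd g₁ k))) / pf w cc dd g₁ y))) := by
      rw [hmhN]
      apply Finset.sum_congr rfl
      intro x _
      rw [hdd_def, hmm2 x]
    rw [eL, hcore0, hAf_def, hBf_def, hX1_def, hX2_def]
  -- integrability of the error-moment integrands
  have hV₁ : ∀ y, |X1 y| ≤ ∑ k : ι₁ × ι₂, |v₁ k.1| := by
    intro y
    rw [hX1_def]
    exact condmean_abs_le hw (fun k => v₁ k.1) g₁ y
  have hV₂ : ∀ y, |X2 y| ≤ ∑ k : ι₁ × ι₂, |v₂ k.2| := by
    intro y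
    rw [hX2_def]
    exact condmean_abs_le hw (fun k => v₂ k.2) g₁ y
  have hX1cont : Continuous X1 := by
    rw [hX1_def]
    exact Continuous.div
      (continuous_finset_sum _ fun k _ => continuous_const.mul (continuous_const.mul
        (continuous_gφ.comp (continuous_id.sub continuous_const))))
      (continuous_pf w cc dd g₁) (fun y => (pf_pos cc dd hw g₁ y).ne')
  have hX2cont : Continuous X2 := by
    rw [hX2_def]
    exact Continuous.div
      (continuous_finset_sum _ fun k _ => continuous_const.mul (continuous_const.mul
        (continuous_gφ.comp (continuous_id.sub continuous_const))))
      (continuous_pf w cc dd g₁) (fun y => (pf_pos cc dd hw g₁ y).ne')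
  have hAint : Integrable Af := by
    rw [hAf_def]
    apply integrable_finset_sum
    intro x _
    have he : (fun y => w x * gφ (y - mm cc dd g₁ x) * (v₁ x.1 - X1 y) ^ 2)
        = fun y => gφ (y - mm cc dd g₁ x) * (w x * (v₁ x.1 - X1 y) ^ 2) := by
      funext y; ring
    rw [he]
    refine integrable_gauss_mul_quad
      ((continuous_const.mul ((continuous_const.sub hX1cont).pow 2)).aestronglyMeasurable)
      (mm_abs_le cc dd (le_refl |g₁|) x)
      (C := w x * (|v₁ x.1| + ∑ k : ι₁ × ι₂, |v₁ k.1|) ^ 2) fun y => ?_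
    have h1 : |v₁ x.1 - X1 y| ≤ |v₁ x.1| + ∑ k : ι₁ × ι₂, |v₁ k.1| := by
      have := hV₁ y
      have := abs_sub (v₁ x.1) (X1 y)
      linarith
    have h2 : (v₁ x.1 - X1 y) ^ 2 ≤ (|v₁ x.1| + ∑ k : ι₁ × ι₂, |v₁ k.1|) ^ 2 := by
      rw [← sq_abs (v₁ x.1 - X1 y)]
      exact pow_le_pow_left₀ (abs_nonneg _) h1 2
    change |w x * (v₁ x.1 - X1 y) ^ 2| ≤ _
    rw [abs_mul, abs_of_pos (hw x), abs_of_nonneg (sq_nonneg _)]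
    have h3 : (1:ℝ) ≤ 1 + y ^ 2 := by nlinarith [sq_nonneg y]
    have h4 : 0 ≤ w x * (|v₁ x.1| + ∑ k : ι₁ × ι₂, |v₁ k.1|) ^ 2 :=
      mul_nonneg (hw x).le (sq_nonneg _)
    nlinarith [mul_le_mul_of_nonneg_left h2 (hw x).le, sq_nonneg y,
      mul_nonneg h4 (sq_nonneg y)]
  have hBint : Integrable Bf := by
    rw [hBf_def]
    apply integrable_finset_sum
    intro x _
    have he : (fun y => w x * gφ (y - mm cc dd g₁ x) * ((v₁ x.1 - X1 y) * (v₂ x.2 - X2 y)))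
        = fun y => gφ (y - mm cc dd g₁ x) *
          (w x * ((v₁ x.1 - X1 y) * (v₂ x.2 - X2 y))) := by
      funext y; ring
    rw [he]
    refine integrable_gauss_mul_quad
      ((continuous_const.mul ((continuous_const.sub hX1cont).mul
        (continuous_const.sub hX2cont))).aestronglyMeasurable)
      (mm_abs_le cc dd (le_refl |g₁|) x)
      (C := w x * ((|v₁ x.1| + ∑ k : ι₁ × ι₂, |v₁ k.1|) *
        (|v₂ x.2| + ∑ k : ι₁ × ι₂, |v₂ k.2|))) fun y => ?_
    have h1 : |v₁ x.1 - X1 y| ≤ |v₁ x.1| + ∑ k : ι₁ × ι₂, |v₁ k.1| := by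
      have := hV₁ y
      have := abs_sub (v₁ x.1) (X1 y)
      linarith
    have h1' : |v₂ x.2 - X2 y| ≤ |v₂ x.2| + ∑ k : ι₁ × ι₂, |v₂ k.2| := by
      have := hV₂ y
      have := abs_sub (v₂ x.2) (X2 y)
      linarith
    have h2 : |(v₁ x.1 - X1 y) * (v₂ x.2 - X2 y)| ≤
        (|v₁ x.1| + ∑ k : ι₁ × ι₂, |v₁ k.1|) * (|v₂ x.2| + ∑ k : ι₁ × ι₂, |v₂ k.2|) := by
      rw [abs_mul]
      exact mul_le_mul h1 h1' (abs_nonneg _) (by positivity)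
    change |w x * ((v₁ x.1 - X1 y) * (v₂ x.2 - X2 y))| ≤ _
    rw [abs_mul, abs_of_pos (hw x)]
    have h3 : (1:ℝ) ≤ 1 + y ^ 2 := by nlinarith [sq_nonneg y]
    have h4 : 0 ≤ w x * ((|v₁ x.1| + ∑ k : ι₁ × ι₂, |v₁ k.1|) *
        (|v₂ x.2| + ∑ k : ι₁ × ι₂, |v₂ k.2|)) := by
      apply mul_nonneg (hw x).le
      apply mul_nonneg
      · have := Finset.sum_nonneg (s := (Finset.univ : Finset (ι₁ × ι₂)))
          (f := fun k => |v₁ k.1|) fun k _ => abs_nonneg _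
        linarith [abs_nonneg (v₁ x.1)]
      · have := Finset.sum_nonneg (s := (Finset.univ : Finset (ι₁ × ι₂)))
          (f := fun k => |v₂ k.2|) fun k _ => abs_nonneg _
        linarith [abs_nonneg (v₂ x.2)]
    nlinarith [mul_le_mul_of_nonneg_left h2 (hw x).le, sq_nonneg y,
      mul_nonneg h4 (sq_nonneg y), abs_nonneg ((v₁ x.1 - X1 y) * (v₂ x.2 - X2 y))]
  -- the value of the derivative given by `key`
  have hkeyval : (∫ y : ℝ, ∑ x : ι₁ × ι₂, w x * (dd x * (gφ (y - mm cc dd g₁ x) *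
      (mm cc dd g₁ x - mh w cc dd g₁ y))))
      = (s * a * (s * a * g₁)) * (∫ y : ℝ, Af y)
        + (s * a * (s * b * g₂)) * ∫ y : ℝ, Bf y := by
    rw [show (fun y : ℝ => ∑ x : ι₁ × ι₂, w x * (dd x * (gφ (y - mm cc dd g₁ x) *
        (mm cc dd g₁ x - mh w cc dd g₁ y))))
        = fun y : ℝ => (s * a * (s * a * g₁)) * Af y + (s * a * (s * b * g₂)) * Bf y
      from funext fun y => hcore y]
    rw [integral_add (hAint.const_mul _) (hBint.const_mul _),
      integral_const_mul, integral_const_mul]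
  -- identify ∫Af, ∫Bf with the E-integrals in the goal
  have hX1e : ∀ y : ℝ, (∑ i, ∑ j, v₁ i * (p₁ i * p₂ j *
      gφ (y - s * (a * g₁ * v₁ i + b * g₂ * v₂ j)))) / pf w cc dd g₁ y = X1 y := by
    intro y
    rw [hX1_def]
    congr 1
    rw [Fintype.sum_prod_type]
    apply Finset.sum_congr rfl
    intro i _
    apply Finset.sum_congr rfl
    intro j _
    rw [← hmmeq g₁ (i, j)]
  have hX2e : ∀ y : ℝ, (∑ i, ∑ j, v₂ j * (p₁ i * p₂ j *
      gφ (y - s * (a * g₁ * v₁ i + b * g₂ * v₂ j)))) / pf w cc dd g₁ y = X2 y := by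
    intro y
    rw [hX2_def]
    congr 1
    rw [Fintype.sum_prod_type]
    apply Finset.sum_congr rfl
    intro i _
    apply Finset.sum_congr rfl
    intro j _
    rw [← hmmeq g₁ (i, j)]
  have hE11 : (∫ y : ℝ, ∑ i, ∑ j, p₁ i * p₂ j *
      gφ (y - s * (a * g₁ * v₁ i + b * g₂ * v₂ j)) *
        (v₁ i - (∑ i, ∑ j, v₁ i * (p₁ i * p₂ j *
          gφ (y - s * (a * g₁ * v₁ i + b * g₂ * v₂ j)))) / pf w cc dd g₁ y) ^ 2)
      = ∫ y : ℝ, Af y := by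
    apply integral_congr_ae
    filter_upwards with y
    rw [hX1e y]
    simp only [hAf_def]
    rw [Fintype.sum_prod_type]
    apply Finset.sum_congr rfl
    intro i _
    apply Finset.sum_congr rfl
    intro j _
    rw [← hmmeq g₁ (i, j)]
  have hE12 : (∫ y : ℝ, ∑ i, ∑ j, p₁ i * p₂ j *
      gφ (y - s * (a * g₁ * v₁ i + b * g₂ * v₂ j)) *
        ((v₁ i - (∑ i, ∑ j, v₁ i * (p₁ i * p₂ j *
          gφ (y - s * (a * g₁ * v₁ i + b * g₂ * v₂ j)))) / pf w cc dd g₁ y) *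
         (v₂ j - (∑ i, ∑ j, v₂ j * (p₁ i * p₂ j *
          gφ (y - s * (a * g₁ * v₁ i + b * g₂ * v₂ j)))) / pf w cc dd g₁ y)))
      = ∫ y : ℝ, Bf y := by
    apply integral_congr_ae
    filter_upwards with y
    rw [hX1e y, hX2e y]
    simp only [hBf_def]
    rw [Fintype.sum_prod_type]
    apply Finset.sum_congr rfl
    intro i _
    apply Finset.sum_congr rfl
    intro j _
    rw [← hmmeq g₁ (i, j)]
  have hcoef : s * a * (s * a * g₁) = snr * (a ^ 2 * g₁) := by
    rw [← hs]; ring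
  have hcoef2 : s * a * (s * b * g₂) = snr * (a * b * g₂) := by
    rw [← hs]; ring
  refine (key w cc dd hw hw1 g₁).congr_deriv ?_
  rw [hkeyval, hE11, hE12, hcoef, hcoef2]
  ring
end

section
/- In the two-user scalar Gaussian MAC with finite-alphabet inputs, for every g₂ > 0 the map g₂ ↦ I(g₁, g₂) is differentiable and its derivative satisfies ∂I/∂g₂ = snr·(b²·g₂·E₂₂ + a·b·g₁·E₁₂), where E₂₂ and E₁₂ are evaluated at amplitudes (g₁, g₂). -/
open MeasureTheory Finset Real Filter

set_option linter.unusedSectionVars false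
set_option maxHeartbeats 1000000
namespace Stmt5

noncomputable def nphi (t : ℝ) : ℝ := (Real.sqrt (2 * Real.pi))⁻¹ * Real.exp (-t ^ 2 / 2)

lemma sqrt_two_pi_pos : 0 < Real.sqrt (2 * Real.pi) :=
  Real.sqrt_pos.mpr (by positivity)

lemma one_le_sqrt_two_pi : 1 ≤ Real.sqrt (2 * Real.pi) := by
  rw [show (1:ℝ) = Real.sqrt 1 by simp]
  exact Real.sqrt_le_sqrt (by nlinarith [Real.pi_gt_three])

lemma nphi_pos (t : ℝ) : 0 < nphi t := by
  unfold nphi; positivity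

lemma nphi_le_one (t : ℝ) : nphi t ≤ 1 := by
  unfold nphi
  have h1 : Real.exp (-t ^ 2 / 2) ≤ 1 := by
    rw [Real.exp_le_one_iff]; nlinarith [sq_nonneg t]
  have h2 : (Real.sqrt (2 * Real.pi))⁻¹ ≤ 1 := by
    rw [inv_le_one_iff₀]; right; exact one_le_sqrt_two_pi
  calc (Real.sqrt (2 * Real.pi))⁻¹ * Real.exp (-t ^ 2 / 2) ≤ 1 * 1 := by
        apply mul_le_mul h2 h1 (le_of_lt (Real.exp_pos _)) zero_le_one
    _ = 1 := by ring

@[fun_prop] lemma continuous_nphi : Continuous nphi := by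
  unfold nphi; fun_prop

lemma hasDerivAt_nphi (t : ℝ) : HasDerivAt nphi (-t * nphi t) t := by
  have h : HasDerivAt (fun t : ℝ => -t ^ 2 / 2) (-t) t := by
    have := ((hasDerivAt_pow 2 t).neg).div_const 2
    simpa using this.congr_deriv (by ring)
  have := (h.exp).const_mul (Real.sqrt (2 * Real.pi))⁻¹
  unfold nphi
  exact this.congr_deriv (by ring)

/-- Gaussian bump bound: if `|c| ≤ M` then `nphi (y - c) ≤ exp (M * |y| - y^2/2)`. -/
lemma nphi_sub_le {c M y : ℝ} (hc : |c| ≤ M) :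
    nphi (y - c) ≤ Real.exp (M * |y| - y ^ 2 / 2) := by
  unfold nphi
  have h1 : (Real.sqrt (2 * Real.pi))⁻¹ ≤ 1 := by
    rw [inv_le_one_iff₀]; right; exact one_le_sqrt_two_pi
  have h2 : Real.exp (-(y - c) ^ 2 / 2) ≤ Real.exp (M * |y| - y ^ 2 / 2) := by
    apply Real.exp_le_exp.mpr
    have hcy : c * y ≤ M * |y| := by
      calc c * y ≤ |c * y| := le_abs_self _
        _ = |c| * |y| := abs_mul _ _
        _ ≤ M * |y| := by apply mul_le_mul_of_nonneg_right hc (abs_nonneg _)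
    nlinarith [sq_nonneg c]
  calc (Real.sqrt (2 * Real.pi))⁻¹ * Real.exp (-(y - c) ^ 2 / 2)
      ≤ 1 * Real.exp (M * |y| - y ^ 2 / 2) :=
        mul_le_mul h1 h2 (le_of_lt (Real.exp_pos _)) zero_le_one
    _ = _ := by ring

/-- Workhorse integrability: polynomial times near-Gaussian. -/
lemma integrable_poly_gauss (n : ℕ) (M : ℝ) :
    Integrable (fun y : ℝ => (1 + |y|) ^ n * Real.exp (M * |y| - y ^ 2 / 2)) := by
  have hbound : ∀ y : ℝ, (1 + |y|) ^ n * Real.exp (M * |y| - y ^ 2 / 2)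
      ≤ Real.exp (((n : ℝ) + |M|) ^ 2) * Real.exp (-(1/4 : ℝ) * y ^ 2) := by
    intro y
    have h1 : (1 + |y|) ^ n ≤ Real.exp ((n : ℝ) * |y|) := by
      calc (1 + |y|) ^ n ≤ (Real.exp |y|) ^ n := by
            apply pow_le_pow_left₀ (by positivity)
            linarith [Real.add_one_le_exp |y|]
        _ = Real.exp ((n : ℝ) * |y|) := by rw [← Real.exp_nat_mul]
    have h2 : (1 + |y|) ^ n * Real.exp (M * |y| - y ^ 2 / 2)
        ≤ Real.exp ((n : ℝ) * |y| + (M * |y| - y ^ 2 / 2)) := by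
      rw [Real.exp_add]
      apply mul_le_mul_of_nonneg_right h1 (le_of_lt (Real.exp_pos _))
    refine h2.trans ?_
    rw [← Real.exp_add]
    apply Real.exp_le_exp.mpr
    have h3 : (n : ℝ) * |y| + M * |y| ≤ ((n : ℝ) + |M|) * |y| := by
      have : M * |y| ≤ |M| * |y| := mul_le_mul_of_nonneg_right (le_abs_self _) (abs_nonneg _)
      nlinarith
    have h4 : ((n : ℝ) + |M|) * |y| ≤ y ^ 2 / 4 + ((n : ℝ) + |M|) ^ 2 := by
      nlinarith [sq_nonneg (|y| / 2 - ((n : ℝ) + |M|)), sq_abs y]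
    linarith
  apply Integrable.mono' ((integrable_exp_neg_mul_sq (by norm_num : (0:ℝ) < 1/4)).const_mul
    (Real.exp (((n : ℝ) + |M|) ^ 2)))
  · apply Continuous.aestronglyMeasurable; fun_prop
  · filter_upwards with y
    rw [Real.norm_eq_abs, abs_of_nonneg (by positivity)]
    exact hbound y

/-- Master integrability criterion. -/
lemma integrable_of_le_poly_gauss {f : ℝ → ℝ} (hf : Continuous f) (C M : ℝ) (n : ℕ)
    (h : ∀ y, |f y| ≤ C * ((1 + |y|) ^ n * Real.exp (M * |y| - y ^ 2 / 2))) :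
    Integrable f := by
  apply Integrable.mono' ((integrable_poly_gauss n M).const_mul C)
  · exact hf.aestronglyMeasurable
  · filter_upwards with y
    rw [Real.norm_eq_abs]
    exact h y

lemma integral_nphi_smul_eq (f : ℝ → ℝ) (c : ℝ) :
    ∫ y : ℝ, f (y - c) = ∫ t : ℝ, f t :=
  integral_sub_right_eq_self f c

/-- `∫ t * nphi t = 0` (odd function). -/
lemma integral_id_mul_nphi : ∫ t : ℝ, t * nphi t = 0 := by
  have hodd : ∀ t : ℝ, (-t) * nphi (-t) = -(t * nphi t) := by
    intro t; unfold nphi; ring_nf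
  have := MeasureTheory.integral_neg_eq_self (fun t : ℝ => t * nphi t) volume
  have h2 : ∫ t : ℝ, (-t) * nphi (-t) = ∫ t : ℝ, t * nphi t := this
  rw [show (fun t : ℝ => (-t) * nphi (-t)) = fun t => -(t * nphi t) from funext hodd] at h2
  rw [integral_neg] at h2
  linarith


section Abstract
variable {κ : Type*} [Fintype κ]

/-- mean as a function of the gain -/
def mA (α β : κ → ℝ) (g : ℝ) (k : κ) : ℝ := α k + β k * g
/-- output density -/
noncomputable def pA (w α β : κ → ℝ) (g y : ℝ) : ℝ := ∑ k, w k * nphi (y - mA α β g k)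
/-- ∂p/∂g -/
noncomputable def pgA (w α β : κ → ℝ) (g y : ℝ) : ℝ :=
  ∑ k, w k * (β k * ((y - mA α β g k) * nphi (y - mA α β g k)))
/-- ∂p/∂y -/
noncomputable def pyA (w α β : κ → ℝ) (g y : ℝ) : ℝ :=
  ∑ k, w k * (-(y - mA α β g k) * nphi (y - mA α β g k))
/-- numerator for β-posterior mean -/
noncomputable def NA (w α β : κ → ℝ) (g y : ℝ) : ℝ := ∑ k, w k * β k * nphi (y - mA α β g k)
/-- ∂N/∂y -/
noncomputable def NyA (w α β : κ → ℝ) (g y : ℝ) : ℝ :=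
  ∑ k, w k * β k * (-(y - mA α β g k) * nphi (y - mA α β g k))

variable (w α β : κ → ℝ)

lemma pA_pos [Nonempty κ] (hw : ∀ k, 0 < w k) (g y : ℝ) : 0 < pA w α β g y := by
  apply Finset.sum_pos
  · intro k _; exact mul_pos (hw k) (nphi_pos _)
  · exact univ_nonempty

lemma pA_le_one (hw : ∀ k, 0 < w k) (hw1 : ∑ k, w k = 1) (g y : ℝ) : pA w α β g y ≤ 1 := by
  calc pA w α β g y ≤ ∑ k, w k := by
        apply Finset.sum_le_sum
        intro k _
        calc w k * nphi (y - mA α β g k) ≤ w k * 1 :=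
              mul_le_mul_of_nonneg_left (nphi_le_one _) (hw k).le
          _ = w k := mul_one _
    _ = 1 := hw1

lemma wk_le_one (hw : ∀ k, 0 < w k) (hw1 : ∑ k, w k = 1) (k : κ) : w k ≤ 1 := by
  rw [← hw1]
  exact Finset.single_le_sum (fun k _ => (hw k).le) (mem_univ k)

lemma log_pA_nonpos [Nonempty κ] (hw : ∀ k, 0 < w k) (hw1 : ∑ k, w k = 1) (g y : ℝ) :
    Real.log (pA w α β g y) ≤ 0 :=
  Real.log_nonpos (pA_pos w α β hw g y).le (pA_le_one w α β hw hw1 g y)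

lemma pA_le_gauss {g M : ℝ} (hw : ∀ k, 0 < w k) (hw1 : ∑ k, w k = 1)
    (hM : ∀ k, |mA α β g k| ≤ M) (y : ℝ) :
    pA w α β g y ≤ Real.exp (M * |y| - y ^ 2 / 2) := by
  calc pA w α β g y ≤ ∑ k, w k * Real.exp (M * |y| - y ^ 2 / 2) := by
        apply Finset.sum_le_sum
        intro k _
        exact mul_le_mul_of_nonneg_left (nphi_sub_le (hM k)) (hw k).le
    _ = Real.exp (M * |y| - y ^ 2 / 2) := by rw [← Finset.sum_mul, hw1, one_mul]

lemma log_nphi (t : ℝ) :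
    Real.log (nphi t) = -Real.log (Real.sqrt (2 * Real.pi)) - t ^ 2 / 2 := by
  unfold nphi
  rw [Real.log_mul (by positivity) (Real.exp_pos _).ne', Real.log_inv, Real.log_exp]
  ring

/-- Two-sided bound on `log p`. -/
lemma abs_log_pA_le [Nonempty κ] {g M : ℝ} (hw : ∀ k, 0 < w k) (hw1 : ∑ k, w k = 1)
    (hM : ∀ k, |mA α β g k| ≤ M) (hM0 : 0 ≤ M) (y : ℝ) :
    |Real.log (pA w α β g y)| ≤
      (Real.log (Real.sqrt (2 * Real.pi)) - Real.log (w (Classical.arbitrary κ)) + (1 + M) ^ 2)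
        * (1 + |y|) ^ 2 := by
  set k₀ := Classical.arbitrary κ
  have hA0 : 0 ≤ Real.log (Real.sqrt (2 * Real.pi)) - Real.log (w k₀) := by
    have h1 : 0 ≤ Real.log (Real.sqrt (2 * Real.pi)) := by
      apply Real.log_nonneg
      rw [show (1:ℝ) = Real.sqrt 1 by simp]
      exact Real.sqrt_le_sqrt (by nlinarith [Real.pi_gt_three])
    have h2 : Real.log (w k₀) ≤ 0 := Real.log_nonpos (hw k₀).le (wk_le_one w hw hw1 k₀)
    linarith
  have hlow : -((Real.log (Real.sqrt (2 * Real.pi)) - Real.log (w k₀)) + (y - mA α β g k₀) ^ 2 / 2)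
      ≤ Real.log (pA w α β g y) := by
    have hle : w k₀ * nphi (y - mA α β g k₀) ≤ pA w α β g y := by
      apply Finset.single_le_sum (f := fun k => w k * nphi (y - mA α β g k))
        (fun k _ => (mul_pos (hw k) (nphi_pos _)).le) (mem_univ k₀)
    have := Real.log_le_log (mul_pos (hw k₀) (nphi_pos _)) hle
    rw [Real.log_mul (hw k₀).ne' (nphi_pos _).ne', log_nphi] at this
    linarith
  have hsq : (y - mA α β g k₀) ^ 2 / 2 ≤ (1 + M) ^ 2 * (1 + |y|) ^ 2 := by
    have h1 : |y - mA α β g k₀| ≤ |y| + M := by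
      calc |y - mA α β g k₀| ≤ |y| + |mA α β g k₀| := abs_sub _ _
        _ ≤ |y| + M := by linarith [hM k₀]
    have h2 : (y - mA α β g k₀) ^ 2 ≤ (|y| + M) ^ 2 := by
      rw [← sq_abs (y - mA α β g k₀)]
      exact pow_le_pow_left₀ (abs_nonneg _) h1 2
    have h3 : |y| + M ≤ (1 + M) * (1 + |y|) := by nlinarith [mul_nonneg hM0 (abs_nonneg y)]
    have h4 : (|y| + M) ^ 2 ≤ ((1 + M) * (1 + |y|)) ^ 2 :=
      pow_le_pow_left₀ (by positivity) h3 2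
    rw [mul_pow] at h4
    have h5 : (0:ℝ) ≤ (1 + M) ^ 2 * (1 + |y|) ^ 2 := by positivity
    linarith
  have hone : (1:ℝ) ≤ (1 + |y|) ^ 2 := by nlinarith [abs_nonneg y]
  have h3 : (Real.log (Real.sqrt (2 * Real.pi)) - Real.log (w k₀)) ≤
      (Real.log (Real.sqrt (2 * Real.pi)) - Real.log (w k₀)) * (1 + |y|) ^ 2 := by
    nlinarith [mul_le_mul_of_nonneg_left hone hA0]
  rw [add_mul, abs_le]
  constructor
  · linarith
  · have := log_pA_nonpos w α β hw hw1 g y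
    have hpos : 0 ≤ (Real.log (Real.sqrt (2 * Real.pi)) - Real.log (w k₀)) * (1 + |y|) ^ 2
        + (1 + M) ^ 2 * (1 + |y|) ^ 2 := by positivity
    linarith

/-- derivative of the kernel in `g` -/
lemma hasDerivAt_nphi_g (y : ℝ) (g : ℝ) (k : κ) :
    HasDerivAt (fun g => nphi (y - mA α β g k))
      (β k * ((y - mA α β g k) * nphi (y - mA α β g k))) g := by
  have hin : HasDerivAt (fun g : ℝ => y - mA α β g k) (-β k) g := by
    unfold mA
    simpa using (((hasDerivAt_id g).const_mul (β k)).const_add (α k)).const_sub y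
  have := (hasDerivAt_nphi (y - mA α β g k)).comp g hin
  exact this.congr_deriv (by ring)

/-- derivative of the kernel in `y` -/
lemma hasDerivAt_nphi_y (g : ℝ) (k : κ) (y : ℝ) :
    HasDerivAt (fun y => nphi (y - mA α β g k))
      (-(y - mA α β g k) * nphi (y - mA α β g k)) y := by
  have hin : HasDerivAt (fun y : ℝ => y - mA α β g k) 1 y := (hasDerivAt_id y).sub_const _
  have := (hasDerivAt_nphi (y - mA α β g k)).comp y hin
  exact this.congr_deriv (by ring)

lemma hasDerivAt_pA_g (y : ℝ) (g : ℝ) :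
    HasDerivAt (fun g => pA w α β g y) (pgA w α β g y) g := by
  apply HasDerivAt.fun_sum
  intro k _
  exact (hasDerivAt_nphi_g α β y g k).const_mul (w k)

lemma hasDerivAt_pA_y (g y : ℝ) :
    HasDerivAt (fun y => pA w α β g y) (pyA w α β g y) y := by
  apply HasDerivAt.fun_sum
  intro k _
  exact (hasDerivAt_nphi_y α β g k y).const_mul (w k)

lemma hasDerivAt_NA_y (g y : ℝ) :
    HasDerivAt (fun y => NA w α β g y) (NyA w α β g y) y := by
  apply HasDerivAt.fun_sum
  intro k _
  exact (hasDerivAt_nphi_y α β g k y).const_mul (w k * β k)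

lemma continuous_pA (g : ℝ) : Continuous (fun y => pA w α β g y) := by
  unfold pA
  apply continuous_finset_sum
  intro k _
  fun_prop

lemma continuous_pgA (g : ℝ) : Continuous (fun y => pgA w α β g y) := by
  unfold pgA
  apply continuous_finset_sum
  intro k _
  fun_prop

lemma continuous_pyA (g : ℝ) : Continuous (fun y => pyA w α β g y) := by
  unfold pyA
  apply continuous_finset_sum
  intro k _
  fun_prop

lemma continuous_NA (g : ℝ) : Continuous (fun y => NA w α β g y) := by
  unfold NA
  apply continuous_finset_sum
  intro k _
  fun_prop

lemma continuous_NyA (g : ℝ) : Continuous (fun y => NyA w α β g y) := by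
  unfold NyA
  apply continuous_finset_sum
  intro k _
  fun_prop

end Abstract

lemma abs_sub_le_poly {c M y : ℝ} (hc : |c| ≤ M) (hM0 : 0 ≤ M) :
    |y - c| ≤ (1 + M) * (1 + |y|) := by
  have h := abs_sub y c
  have := abs_nonneg y
  nlinarith [mul_nonneg hM0 (abs_nonneg y)]

section Abstract2
variable {κ : Type*} [Fintype κ] (w α β : κ → ℝ)

/-- weighted mean numerator -/
noncomputable def SmA (g y : ℝ) : ℝ := ∑ k, w k * mA α β g k * nphi (y - mA α β g k)

/-- Weighted-sum bound against `pA`. -/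
lemma sum_w_bound (hw : ∀ k, 0 < w k) (f : κ → ℝ) (g y : ℝ) (C : ℝ)
    (h : ∀ k, |f k| ≤ C * nphi (y - mA α β g k)) :
    |∑ k, w k * f k| ≤ C * pA w α β g y := by
  calc |∑ k, w k * f k| ≤ ∑ k, |w k * f k| := Finset.abs_sum_le_sum_abs _ _
    _ ≤ ∑ k, w k * (C * nphi (y - mA α β g k)) := by
        apply Finset.sum_le_sum
        intro k _
        rw [abs_mul, abs_of_pos (hw k)]
        exact mul_le_mul_of_nonneg_left (h k) (hw k).le
    _ = C * pA w α β g y := by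
        unfold pA
        rw [Finset.mul_sum]
        apply Finset.sum_congr rfl
        intro k _
        ring

lemma abs_pgA_le {g M : ℝ} (hw : ∀ k, 0 < w k) (hM : ∀ k, |mA α β g k| ≤ M) (hM0 : 0 ≤ M)
    {B : ℝ} (hB : ∀ k, |β k| ≤ B) (hB0 : 0 ≤ B) (y : ℝ) :
    |pgA w α β g y| ≤ B * (1 + M) * (1 + |y|) * pA w α β g y := by
  have h := sum_w_bound w α β hw (fun k => β k * ((y - mA α β g k) * nphi (y - mA α β g k)))
    g y (B * ((1 + M) * (1 + |y|))) ?_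
  · calc |pgA w α β g y|
        = |∑ k, w k * (β k * ((y - mA α β g k) * nphi (y - mA α β g k)))| := rfl
      _ ≤ B * ((1 + M) * (1 + |y|)) * pA w α β g y := h
      _ = B * (1 + M) * (1 + |y|) * pA w α β g y := by ring
  · intro k
    have h1 : |y - mA α β g k| ≤ (1 + M) * (1 + |y|) := abs_sub_le_poly (hM k) hM0
    calc |β k * ((y - mA α β g k) * nphi (y - mA α β g k))|
        = |β k| * (|y - mA α β g k| * nphi (y - mA α β g k)) := by
          rw [abs_mul, abs_mul, abs_of_pos (nphi_pos _)]
      _ ≤ B * ((1 + M) * (1 + |y|) * nphi (y - mA α β g k)) := by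
          apply mul_le_mul (hB k) _ (mul_nonneg (abs_nonneg _) (nphi_pos _).le) hB0
          exact mul_le_mul_of_nonneg_right h1 (nphi_pos _).le
      _ = B * ((1 + M) * (1 + |y|)) * nphi (y - mA α β g k) := by ring

lemma abs_pyA_le {g M : ℝ} (hw : ∀ k, 0 < w k) (hM : ∀ k, |mA α β g k| ≤ M) (hM0 : 0 ≤ M)
    (y : ℝ) : |pyA w α β g y| ≤ (1 + M) * (1 + |y|) * pA w α β g y := by
  have h := sum_w_bound w α β hw (fun k => -(y - mA α β g k) * nphi (y - mA α β g k))
    g y ((1 + M) * (1 + |y|)) ?_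
  · calc |pyA w α β g y|
        = |∑ k, w k * (-(y - mA α β g k) * nphi (y - mA α β g k))| := rfl
      _ ≤ (1 + M) * (1 + |y|) * pA w α β g y := h
  · intro k
    have h1 : |y - mA α β g k| ≤ (1 + M) * (1 + |y|) := abs_sub_le_poly (hM k) hM0
    calc |(-(y - mA α β g k)) * nphi (y - mA α β g k)|
        = |y - mA α β g k| * nphi (y - mA α β g k) := by
          rw [abs_mul, abs_neg, abs_of_pos (nphi_pos _)]
      _ ≤ (1 + M) * (1 + |y|) * nphi (y - mA α β g k) :=
          mul_le_mul_of_nonneg_right h1 (nphi_pos _).le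

lemma abs_NA_le {g : ℝ} (hw : ∀ k, 0 < w k) {B : ℝ} (hB : ∀ k, |β k| ≤ B) (y : ℝ) :
    |NA w α β g y| ≤ B * pA w α β g y := by
  have hNA : NA w α β g y = ∑ k, w k * (β k * nphi (y - mA α β g k)) := by
    unfold NA; exact Finset.sum_congr rfl fun k _ => by ring
  rw [hNA]
  apply sum_w_bound w α β hw _ g y B
  intro k
  calc |β k * nphi (y - mA α β g k)| = |β k| * nphi (y - mA α β g k) := by
        rw [abs_mul, abs_of_pos (nphi_pos _)]
    _ ≤ B * nphi (y - mA α β g k) := mul_le_mul_of_nonneg_right (hB k) (nphi_pos _).le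

lemma abs_NyA_le {g M : ℝ} (hw : ∀ k, 0 < w k) (hM : ∀ k, |mA α β g k| ≤ M) (hM0 : 0 ≤ M)
    {B : ℝ} (hB : ∀ k, |β k| ≤ B) (hB0 : 0 ≤ B) (y : ℝ) :
    |NyA w α β g y| ≤ B * (1 + M) * (1 + |y|) * pA w α β g y := by
  have hNyA : NyA w α β g y
      = ∑ k, w k * (β k * (-(y - mA α β g k) * nphi (y - mA α β g k))) := by
    unfold NyA; exact Finset.sum_congr rfl fun k _ => by ring
  rw [hNyA]
  have h := sum_w_bound w α β hw
    (fun k => β k * (-(y - mA α β g k) * nphi (y - mA α β g k))) g y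
    (B * ((1 + M) * (1 + |y|))) ?_
  · calc _ ≤ B * ((1 + M) * (1 + |y|)) * pA w α β g y := h
      _ = B * (1 + M) * (1 + |y|) * pA w α β g y := by ring
  · intro k
    have h1 : |y - mA α β g k| ≤ (1 + M) * (1 + |y|) := abs_sub_le_poly (hM k) hM0
    calc |β k * (-(y - mA α β g k) * nphi (y - mA α β g k))|
        = |β k| * (|y - mA α β g k| * nphi (y - mA α β g k)) := by
          rw [abs_mul, abs_mul, abs_neg, abs_of_pos (nphi_pos _)]
      _ ≤ B * ((1 + M) * (1 + |y|) * nphi (y - mA α β g k)) := by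
          apply mul_le_mul (hB k) _ (mul_nonneg (abs_nonneg _) (nphi_pos _).le) hB0
          exact mul_le_mul_of_nonneg_right h1 (nphi_pos _).le
      _ = B * ((1 + M) * (1 + |y|)) * nphi (y - mA α β g k) := by ring

end Abstract2

lemma integrable_nphi_shift (c : ℝ) : Integrable (fun y : ℝ => nphi (y - c)) := by
  refine integrable_of_le_poly_gauss ?_ 1 |c| 0 ?_
  · fun_prop
  · intro y
    have h1 : nphi (y - c) ≤ Real.exp (|c| * |y| - y ^ 2 / 2) := nphi_sub_le le_rfl
    rw [abs_of_pos (nphi_pos _)]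
    calc nphi (y - c) ≤ Real.exp (|c| * |y| - y ^ 2 / 2) := h1
      _ = 1 * ((1 + |y|) ^ 0 * Real.exp (|c| * |y| - y ^ 2 / 2)) := by ring

lemma integrable_shift_mul_nphi (c : ℝ) : Integrable (fun y : ℝ => (y - c) * nphi (y - c)) := by
  refine integrable_of_le_poly_gauss ?_ (1 + |c|) |c| 1 ?_
  · fun_prop
  · intro y
    have h1 : nphi (y - c) ≤ Real.exp (|c| * |y| - y ^ 2 / 2) := nphi_sub_le le_rfl
    have h3 : |y - c| ≤ (1 + |c|) * (1 + |y|) := abs_sub_le_poly le_rfl (abs_nonneg c)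
    calc |(y - c) * nphi (y - c)| = |y - c| * nphi (y - c) := by
          rw [abs_mul, abs_of_pos (nphi_pos _)]
      _ ≤ ((1 + |c|) * (1 + |y|)) * Real.exp (|c| * |y| - y ^ 2 / 2) :=
          mul_le_mul h3 h1 (nphi_pos _).le (by positivity)
      _ = (1 + |c|) * ((1 + |y|) ^ 1 * Real.exp (|c| * |y| - y ^ 2 / 2)) := by ring

lemma integral_shift_mul_nphi (c : ℝ) : ∫ y : ℝ, (y - c) * nphi (y - c) = 0 :=
  (integral_sub_right_eq_self (fun t : ℝ => t * nphi t) c).trans integral_id_mul_nphi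

lemma integrable_philogphi (c L' : ℝ) :
    Integrable (fun y : ℝ => nphi (y - c) * (-L' - (y - c) ^ 2 / 2)) := by
  refine integrable_of_le_poly_gauss ?_ (|L'| + (1 + |c|) ^ 2) |c| 2 ?_
  · fun_prop
  · intro y
    have h1 : nphi (y - c) ≤ Real.exp (|c| * |y| - y ^ 2 / 2) := nphi_sub_le le_rfl
    have h2 : |(-L' - (y - c) ^ 2 / 2)| ≤ (|L'| + (1 + |c|) ^ 2) * (1 + |y|) ^ 2 := by
      have h3 : |y - c| ≤ (1 + |c|) * (1 + |y|) := abs_sub_le_poly le_rfl (abs_nonneg c)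
      have h4 : (y - c) ^ 2 ≤ (1 + |c|) ^ 2 * (1 + |y|) ^ 2 := by
        have h5 := pow_le_pow_left₀ (abs_nonneg _) h3 2
        rw [mul_pow] at h5
        rw [← sq_abs]
        exact h5
      have hone : (1 : ℝ) ≤ (1 + |y|) ^ 2 := by nlinarith [abs_nonneg y]
      have h6 := mul_le_mul_of_nonneg_left hone (abs_nonneg L')
      rw [abs_le]
      constructor
      · nlinarith [le_abs_self L', neg_abs_le L', sq_nonneg (y - c)]
      · nlinarith [le_abs_self L', neg_abs_le L', sq_nonneg (y - c), sq_nonneg (1 + |y|),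
          sq_nonneg (1 + |c|), mul_nonneg (sq_nonneg (1 + |c|)) (sq_nonneg (1 + |y|))]
    calc |nphi (y - c) * (-L' - (y - c) ^ 2 / 2)|
        = nphi (y - c) * |(-L' - (y - c) ^ 2 / 2)| := by rw [abs_mul, abs_of_pos (nphi_pos _)]
      _ ≤ Real.exp (|c| * |y| - y ^ 2 / 2) * ((|L'| + (1 + |c|) ^ 2) * (1 + |y|) ^ 2) :=
          mul_le_mul h1 h2 (abs_nonneg _) (Real.exp_pos _).le
      _ = (|L'| + (1 + |c|) ^ 2) * ((1 + |y|) ^ 2 * Real.exp (|c| * |y| - y ^ 2 / 2)) := by ring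

lemma integral_philogphi (c L' : ℝ) :
    ∫ y : ℝ, nphi (y - c) * (-L' - (y - c) ^ 2 / 2) = ∫ t : ℝ, nphi t * (-L' - t ^ 2 / 2) :=
  integral_sub_right_eq_self (fun t : ℝ => nphi t * (-L' - t ^ 2 / 2)) c

section Abstract3
variable {κ : Type*} [Fintype κ] (w α β : κ → ℝ)

lemma continuous_logpA [Nonempty κ] (hw : ∀ k, 0 < w k) (g : ℝ) :
    Continuous (fun y => Real.log (pA w α β g y)) :=
  (continuous_pA w α β g).log fun y => (pA_pos w α β hw g y).ne'

lemma Mg_bound (g : ℝ) : ∀ k, |mA α β g k| ≤ ∑ k, |mA α β g k| :=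
  fun k => Finset.single_le_sum (f := fun k => |mA α β g k|)
    (fun k _ => abs_nonneg _) (mem_univ k)

lemma Mg_nonneg (g : ℝ) : 0 ≤ ∑ k, |mA α β g k| :=
  Finset.sum_nonneg fun k _ => abs_nonneg _

lemma integrable_plogp [Nonempty κ] (hw : ∀ k, 0 < w k) (hw1 : ∑ k, w k = 1) (g : ℝ) :
    Integrable (fun y => pA w α β g y * Real.log (pA w α β g y)) := by
  set M := ∑ k, |mA α β g k| with hMdef
  set Λ := Real.log (Real.sqrt (2 * Real.pi)) - Real.log (w (Classical.arbitrary κ))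
    + (1 + M) ^ 2 with hΛdef
  refine integrable_of_le_poly_gauss ?_ Λ M 2 ?_
  · exact (continuous_pA w α β g).mul (continuous_logpA w α β hw g)
  · intro y
    have h1 := abs_log_pA_le w α β hw hw1 (Mg_bound α β g) (Mg_nonneg α β g) y
    have h2 := pA_le_gauss w α β hw hw1 (Mg_bound α β g) y
    have hp := pA_pos w α β hw g y
    calc |pA w α β g y * Real.log (pA w α β g y)|
        = pA w α β g y * |Real.log (pA w α β g y)| := by rw [abs_mul, abs_of_pos hp]
      _ ≤ Real.exp (M * |y| - y ^ 2 / 2) * (Λ * (1 + |y|) ^ 2) :=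
          mul_le_mul h2 h1 (abs_nonneg _) (Real.exp_pos _).le
      _ = Λ * ((1 + |y|) ^ 2 * Real.exp (M * |y| - y ^ 2 / 2)) := by ring

theorem abstract_deriv [Nonempty κ] (hw : ∀ k, 0 < w k) (hw1 : ∑ k, w k = 1) (g₀ : ℝ) :
    HasDerivAt
      (fun g => ∫ y : ℝ, ∑ k, w k * nphi (y - mA α β g k) *
        Real.log (nphi (y - mA α β g k) / pA w α β g y))
      (∫ y : ℝ, ∑ k, w k * nphi (y - mA α β g₀ k) *
        ((mA α β g₀ k - SmA w α β g₀ y / pA w α β g₀ y) *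
         (β k - NA w α β g₀ y / pA w α β g₀ y))) g₀ := by
  classical
  set L := Real.log (Real.sqrt (2 * Real.pi)) with hL
  have hConst : (fun g => ∫ y : ℝ, ∑ k, w k * nphi (y - mA α β g k) *
        Real.log (nphi (y - mA α β g k) / pA w α β g y))
      = (fun g => (∫ t : ℝ, nphi t * (-L - t ^ 2 / 2))
          - ∫ y : ℝ, pA w α β g y * Real.log (pA w α β g y)) := by
    funext g
    have hp : ∀ y, 0 < pA w α β g y := pA_pos w α β hw g
    have hptw : ∀ y : ℝ, (∑ k, w k * nphi (y - mA α β g k) *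
          Real.log (nphi (y - mA α β g k) / pA w α β g y))
        = (∑ k, w k * (nphi (y - mA α β g k) * (-L - (y - mA α β g k) ^ 2 / 2)))
          - pA w α β g y * Real.log (pA w α β g y) := by
      intro y
      have hsplit : ∀ k, w k * nphi (y - mA α β g k) *
            Real.log (nphi (y - mA α β g k) / pA w α β g y)
          = w k * (nphi (y - mA α β g k) * (-L - (y - mA α β g k) ^ 2 / 2))
            - w k * nphi (y - mA α β g k) * Real.log (pA w α β g y) := by
        intro k
        rw [Real.log_div (nphi_pos _).ne' (hp y).ne', log_nphi, hL]
        ring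
      rw [Finset.sum_congr rfl fun k _ => hsplit k, Finset.sum_sub_distrib, ← Finset.sum_mul]
      rfl
    have hint1 : ∀ k : κ, Integrable (fun y : ℝ =>
        w k * (nphi (y - mA α β g k) * (-L - (y - mA α β g k) ^ 2 / 2))) :=
      fun k => (integrable_philogphi (mA α β g k) L).const_mul _
    calc (∫ y : ℝ, ∑ k, w k * nphi (y - mA α β g k) *
            Real.log (nphi (y - mA α β g k) / pA w α β g y))
        = ∫ y : ℝ, ((∑ k, w k * (nphi (y - mA α β g k) * (-L - (y - mA α β g k) ^ 2 / 2)))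
            - pA w α β g y * Real.log (pA w α β g y)) := by
          congr 1
          funext y
          exact hptw y
      _ = (∫ y : ℝ, ∑ k, w k * (nphi (y - mA α β g k) * (-L - (y - mA α β g k) ^ 2 / 2)))
          - ∫ y : ℝ, pA w α β g y * Real.log (pA w α β g y) :=
          integral_sub (integrable_finset_sum _ fun k _ => hint1 k)
            (integrable_plogp w α β hw hw1 g)
      _ = (∫ t : ℝ, nphi t * (-L - t ^ 2 / 2))
          - ∫ y : ℝ, pA w α β g y * Real.log (pA w α β g y) := by
          congr 1
          rw [integral_finset_sum _ fun k _ => hint1 k]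
          have hone : ∀ k : κ, (∫ y : ℝ, w k * (nphi (y - mA α β g k)
              * (-L - (y - mA α β g k) ^ 2 / 2)))
              = w k * ∫ t : ℝ, nphi t * (-L - t ^ 2 / 2) := by
            intro k
            rw [MeasureTheory.integral_const_mul, integral_philogphi]
          rw [Finset.sum_congr rfl fun k _ => hone k, ← Finset.sum_mul, hw1, one_mul]
  set M := ∑ k, (|α k| + |β k| * (|g₀| + 1)) with hMdef
  have hM0 : 0 ≤ M := Finset.sum_nonneg fun k _ => by positivity
  have hMball : ∀ g : ℝ, g ∈ Metric.ball g₀ 1 → ∀ k, |mA α β g k| ≤ M := by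
    intro g hg k
    have hgd : |g - g₀| ≤ 1 := by
      rw [Metric.mem_ball, Real.dist_eq] at hg; exact hg.le
    have hgabs : |g| ≤ |g₀| + 1 := by
      have h := abs_sub_abs_le_abs_sub g g₀
      linarith
    have h1 : |mA α β g k| ≤ |α k| + |β k| * (|g₀| + 1) := by
      unfold mA
      calc |α k + β k * g| ≤ |α k| + |β k * g| := abs_add_le _ _
        _ = |α k| + |β k| * |g| := by rw [abs_mul]
        _ ≤ |α k| + |β k| * (|g₀| + 1) := by
            have h2 := mul_le_mul_of_nonneg_left hgabs (abs_nonneg (β k))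
            linarith
    exact h1.trans (Finset.single_le_sum (f := fun k => |α k| + |β k| * (|g₀| + 1))
      (fun k _ => by positivity) (mem_univ k))
  set B := ∑ k, |β k| with hBdef
  have hB : ∀ k, |β k| ≤ B := fun k =>
    Finset.single_le_sum (f := fun k => |β k|) (fun k _ => abs_nonneg _) (mem_univ k)
  have hB0 : 0 ≤ B := Finset.sum_nonneg fun k _ => abs_nonneg _
  set Λ := L - Real.log (w (Classical.arbitrary κ)) + (1 + M) ^ 2 with hΛdef
  have hΛlog : ∀ g ∈ Metric.ball g₀ 1, ∀ y : ℝ,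
      |Real.log (pA w α β g y)| ≤ Λ * (1 + |y|) ^ 2 :=
    fun g hg y => abs_log_pA_le w α β hw hw1 (hMball g hg) hM0 y
  have hΛ0 : 0 ≤ Λ := by
    have h := hΛlog g₀ (Metric.mem_ball_self one_pos) 0
    rw [abs_zero] at h
    norm_num at h
    exact le_trans (abs_nonneg _) h
  have hEnt : HasDerivAt (fun g => ∫ y : ℝ, pA w α β g y * Real.log (pA w α β g y))
      (∫ y : ℝ, pgA w α β g₀ y * Real.log (pA w α β g₀ y) + pgA w α β g₀ y) g₀ := by
    refine (hasDerivAt_integral_of_dominated_loc_of_deriv_le (𝕜 := ℝ) (μ := volume)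
      (F := fun g y => pA w α β g y * Real.log (pA w α β g y))
      (F' := fun g y => pgA w α β g y * Real.log (pA w α β g y) + pgA w α β g y)
      (x₀ := g₀) (Metric.ball_mem_nhds g₀ one_pos)
      (bound := fun y => B * (1 + M) * (1 + Λ) * ((1 + |y|) ^ 3 * Real.exp (M * |y| - y ^ 2 / 2)))
      ?_ ?_ ?_ ?_ ?_ ?_).2
    · exact Eventually.of_forall fun g =>
        ((continuous_pA w α β g).mul (continuous_logpA w α β hw g)).aestronglyMeasurable
    · exact integrable_plogp w α β hw hw1 g₀
    · exact (((continuous_pgA w α β g₀).mul (continuous_logpA w α β hw g₀)).add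
        (continuous_pgA w α β g₀)).aestronglyMeasurable
    · apply Eventually.of_forall
      intro y g hg
      have hpg := abs_pgA_le w α β hw (hMball g hg) hM0 hB hB0 y
      have hlog := hΛlog g hg y
      have hp := pA_pos w α β hw g y
      have hpe := pA_le_gauss w α β hw hw1 (hMball g hg) y
      have hXnn : (0:ℝ) ≤ B * (1 + M) * (1 + |y|) := by positivity
      have hEnn : (0:ℝ) ≤ Real.exp (M * |y| - y ^ 2 / 2) := (Real.exp_pos _).le
      have hfac : Λ * (1 + |y|) ^ 2 + 1 ≤ (1 + Λ) * (1 + |y|) ^ 2 := by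
        nlinarith [abs_nonneg y]
      rw [Real.norm_eq_abs]
      calc |pgA w α β g y * Real.log (pA w α β g y) + pgA w α β g y|
          ≤ |pgA w α β g y| * |Real.log (pA w α β g y)| + |pgA w α β g y| := by
            refine (abs_add_le _ _).trans ?_
            rw [abs_mul]
        _ ≤ (B * (1 + M) * (1 + |y|) * pA w α β g y) * (Λ * (1 + |y|) ^ 2)
            + B * (1 + M) * (1 + |y|) * pA w α β g y := by
            refine add_le_add (mul_le_mul hpg hlog (abs_nonneg _) ?_) hpg
            positivity
        _ ≤ (B * (1 + M) * (1 + |y|) * Real.exp (M * |y| - y ^ 2 / 2)) * (Λ * (1 + |y|) ^ 2)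
            + B * (1 + M) * (1 + |y|) * Real.exp (M * |y| - y ^ 2 / 2) := by
            have hΛy : (0:ℝ) ≤ Λ * (1 + |y|) ^ 2 :=
              mul_nonneg hΛ0 (by positivity)
            refine add_le_add (mul_le_mul_of_nonneg_right ?_ hΛy) ?_
            · exact mul_le_mul_of_nonneg_left hpe hXnn
            · exact mul_le_mul_of_nonneg_left hpe hXnn
        _ = (B * (1 + M) * (1 + |y|) * Real.exp (M * |y| - y ^ 2 / 2))
            * (Λ * (1 + |y|) ^ 2 + 1) := by ring
        _ ≤ (B * (1 + M) * (1 + |y|) * Real.exp (M * |y| - y ^ 2 / 2))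
            * ((1 + Λ) * (1 + |y|) ^ 2) := by
            refine mul_le_mul_of_nonneg_left hfac ?_
            positivity
        _ = B * (1 + M) * (1 + Λ) * ((1 + |y|) ^ 3 * Real.exp (M * |y| - y ^ 2 / 2)) := by
            ring
    · exact (integrable_poly_gauss 3 M).const_mul _
    · apply Eventually.of_forall
      intro y g hg
      have hp := pA_pos w α β hw g y
      have h1 := hasDerivAt_pA_g w α β y g
      have h2 := h1.log hp.ne'
      have h3 := h1.mul h2
      exact h3.congr_deriv (by field_simp)
  have hVal : -(∫ y : ℝ, pgA w α β g₀ y * Real.log (pA w α β g₀ y) + pgA w α β g₀ y)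
      = ∫ y : ℝ, ∑ k, w k * nphi (y - mA α β g₀ k) *
        ((mA α β g₀ k - SmA w α β g₀ y / pA w α β g₀ y) *
         (β k - NA w α β g₀ y / pA w α β g₀ y)) := by
    have hp : ∀ y, 0 < pA w α β g₀ y := pA_pos w α β hw g₀
    have hball0 : g₀ ∈ Metric.ball g₀ 1 := Metric.mem_ball_self one_pos
    have hg0 : ∀ k, |mA α β g₀ k| ≤ M := hMball g₀ hball0
    have hlog0 : ∀ y : ℝ, |Real.log (pA w α β g₀ y)| ≤ Λ * (1 + |y|) ^ 2 := hΛlog g₀ hball0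
    have hpe : ∀ y : ℝ, pA w α β g₀ y ≤ Real.exp (M * |y| - y ^ 2 / 2) :=
      pA_le_gauss w α β hw hw1 hg0
    have hcpA := continuous_pA w α β g₀
    have hcpyA := continuous_pyA w α β g₀
    have hcpgA := continuous_pgA w α β g₀
    have hcNA := continuous_NA w α β g₀
    have hcNyA := continuous_NyA w α β g₀
    have hclog := continuous_logpA w α β hw g₀
    have hratio : ∀ y, |pyA w α β g₀ y / pA w α β g₀ y| ≤ (1 + M) * (1 + |y|) := by
      intro y
      rw [abs_div, abs_of_pos (hp y), div_le_iff₀ (hp y)]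
      exact abs_pyA_le w α β hw hg0 hM0 y
    -- Integrability facts
    have int_pgA : Integrable (fun y : ℝ => pgA w α β g₀ y) := by
      refine integrable_of_le_poly_gauss hcpgA (B * (1 + M)) M 1 ?_
      intro y
      calc |pgA w α β g₀ y| ≤ B * (1 + M) * (1 + |y|) * pA w α β g₀ y :=
            abs_pgA_le w α β hw hg0 hM0 hB hB0 y
        _ ≤ B * (1 + M) * (1 + |y|) * Real.exp (M * |y| - y ^ 2 / 2) :=
            mul_le_mul_of_nonneg_left (hpe y) (by positivity)
        _ = B * (1 + M) * ((1 + |y|) ^ 1 * Real.exp (M * |y| - y ^ 2 / 2)) := by ring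
    have int_pgAlog : Integrable (fun y : ℝ => pgA w α β g₀ y * Real.log (pA w α β g₀ y)) := by
      refine integrable_of_le_poly_gauss (hcpgA.mul hclog) (B * (1 + M) * Λ) M 3 ?_
      intro y
      calc |pgA w α β g₀ y * Real.log (pA w α β g₀ y)|
          = |pgA w α β g₀ y| * |Real.log (pA w α β g₀ y)| := abs_mul _ _
        _ ≤ (B * (1 + M) * (1 + |y|) * pA w α β g₀ y) * (Λ * (1 + |y|) ^ 2) :=
            mul_le_mul (abs_pgA_le w α β hw hg0 hM0 hB hB0 y) (hlog0 y) (abs_nonneg _)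
              (mul_nonneg (by positivity) (hp y).le)
        _ ≤ (B * (1 + M) * (1 + |y|) * Real.exp (M * |y| - y ^ 2 / 2)) * (Λ * (1 + |y|) ^ 2) := by
            refine mul_le_mul_of_nonneg_right (mul_le_mul_of_nonneg_left (hpe y) (by positivity))
              (mul_nonneg hΛ0 (by positivity))
        _ = B * (1 + M) * Λ * ((1 + |y|) ^ 3 * Real.exp (M * |y| - y ^ 2 / 2)) := by ring
    have int_shiftlog : ∀ k : κ, Integrable (fun y : ℝ =>
        (y - mA α β g₀ k) * nphi (y - mA α β g₀ k) * Real.log (pA w α β g₀ y)) := by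
      intro k
      refine integrable_of_le_poly_gauss ?_ ((1 + M) * Λ) M 3 ?_
      · exact (((continuous_id.sub continuous_const).mul
          (continuous_nphi.comp (continuous_id.sub continuous_const))).mul hclog)
      · intro y
        have h1 : |y - mA α β g₀ k| ≤ (1 + M) * (1 + |y|) := abs_sub_le_poly (hg0 k) hM0
        have h2 : nphi (y - mA α β g₀ k) ≤ Real.exp (M * |y| - y ^ 2 / 2) :=
          nphi_sub_le (hg0 k)
        calc |(y - mA α β g₀ k) * nphi (y - mA α β g₀ k) * Real.log (pA w α β g₀ y)|
            = |y - mA α β g₀ k| * nphi (y - mA α β g₀ k) * |Real.log (pA w α β g₀ y)| := by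
              rw [abs_mul, abs_mul, abs_of_pos (nphi_pos _)]
          _ ≤ ((1 + M) * (1 + |y|)) * Real.exp (M * |y| - y ^ 2 / 2) * (Λ * (1 + |y|) ^ 2) := by
              refine mul_le_mul (mul_le_mul h1 h2 (nphi_pos _).le (by positivity)) (hlog0 y)
                (abs_nonneg _) ?_
              positivity
          _ = (1 + M) * Λ * ((1 + |y|) ^ 3 * Real.exp (M * |y| - y ^ 2 / 2)) := by ring
    have int_philog : ∀ k : κ, Integrable (fun y : ℝ =>
        nphi (y - mA α β g₀ k) * Real.log (pA w α β g₀ y)) := by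
      intro k
      refine integrable_of_le_poly_gauss ?_ Λ M 2 ?_
      · exact (continuous_nphi.comp (continuous_id.sub continuous_const)).mul hclog
      · intro y
        calc |nphi (y - mA α β g₀ k) * Real.log (pA w α β g₀ y)|
            = nphi (y - mA α β g₀ k) * |Real.log (pA w α β g₀ y)| := by
              rw [abs_mul, abs_of_pos (nphi_pos _)]
          _ ≤ Real.exp (M * |y| - y ^ 2 / 2) * (Λ * (1 + |y|) ^ 2) :=
              mul_le_mul (nphi_sub_le (hg0 k)) (hlog0 y) (abs_nonneg _) (Real.exp_pos _).le
          _ = Λ * ((1 + |y|) ^ 2 * Real.exp (M * |y| - y ^ 2 / 2)) := by ring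
    have int_phiratio : ∀ k : κ, Integrable (fun y : ℝ =>
        nphi (y - mA α β g₀ k) * (pyA w α β g₀ y / pA w α β g₀ y)) := by
      intro k
      refine integrable_of_le_poly_gauss ?_ (1 + M) M 1 ?_
      · exact (continuous_nphi.comp (continuous_id.sub continuous_const)).mul
          (hcpyA.div hcpA fun y => (hp y).ne')
      · intro y
        calc |nphi (y - mA α β g₀ k) * (pyA w α β g₀ y / pA w α β g₀ y)|
            = nphi (y - mA α β g₀ k) * |pyA w α β g₀ y / pA w α β g₀ y| := by
              rw [abs_mul, abs_of_pos (nphi_pos _)]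
          _ ≤ Real.exp (M * |y| - y ^ 2 / 2) * ((1 + M) * (1 + |y|)) :=
              mul_le_mul (nphi_sub_le (hg0 k)) (hratio y) (abs_nonneg _) (Real.exp_pos _).le
          _ = (1 + M) * ((1 + |y|) ^ 1 * Real.exp (M * |y| - y ^ 2 / 2)) := by ring
    have int_ratio_py : Integrable (fun y : ℝ =>
        NA w α β g₀ y / pA w α β g₀ y * pyA w α β g₀ y) := by
      refine integrable_of_le_poly_gauss ?_ (B * (1 + M)) M 1 ?_
      · exact (hcNA.div hcpA fun y => (hp y).ne').mul hcpyA
      · intro y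
        have h1 : |NA w α β g₀ y / pA w α β g₀ y| ≤ B := by
          rw [abs_div, abs_of_pos (hp y), div_le_iff₀ (hp y)]
          exact abs_NA_le w α β hw hB y
        calc |NA w α β g₀ y / pA w α β g₀ y * pyA w α β g₀ y|
            = |NA w α β g₀ y / pA w α β g₀ y| * |pyA w α β g₀ y| := abs_mul _ _
          _ ≤ B * ((1 + M) * (1 + |y|) * pA w α β g₀ y) :=
              mul_le_mul h1 (abs_pyA_le w α β hw hg0 hM0 y) (abs_nonneg _) hB0
          _ ≤ B * ((1 + M) * (1 + |y|) * Real.exp (M * |y| - y ^ 2 / 2)) := by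
              refine mul_le_mul_of_nonneg_left (mul_le_mul_of_nonneg_left (hpe y)
                (by positivity)) hB0
          _ = B * (1 + M) * ((1 + |y|) ^ 1 * Real.exp (M * |y| - y ^ 2 / 2)) := by ring
    have int_NA : Integrable (fun y : ℝ => NA w α β g₀ y) := by
      refine integrable_of_le_poly_gauss hcNA B M 0 ?_
      intro y
      calc |NA w α β g₀ y| ≤ B * pA w α β g₀ y := abs_NA_le w α β hw hB y
        _ ≤ B * Real.exp (M * |y| - y ^ 2 / 2) := mul_le_mul_of_nonneg_left (hpe y) hB0
        _ = B * ((1 + |y|) ^ 0 * Real.exp (M * |y| - y ^ 2 / 2)) := by ring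
    have int_u'v : Integrable (fun y : ℝ =>
        NyA w α β g₀ y - NA w α β g₀ y / pA w α β g₀ y * pyA w α β g₀ y) := by
      refine integrable_of_le_poly_gauss ?_ (2 * (B * (1 + M))) M 1 ?_
      · exact hcNyA.sub ((hcNA.div hcpA fun y => (hp y).ne').mul hcpyA)
      · intro y
        have h1 : |NA w α β g₀ y / pA w α β g₀ y| ≤ B := by
          rw [abs_div, abs_of_pos (hp y), div_le_iff₀ (hp y)]
          exact abs_NA_le w α β hw hB y
        have h2 : |NA w α β g₀ y / pA w α β g₀ y * pyA w α β g₀ y|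
            ≤ B * ((1 + M) * (1 + |y|) * pA w α β g₀ y) := by
          rw [abs_mul]
          exact mul_le_mul h1 (abs_pyA_le w α β hw hg0 hM0 y) (abs_nonneg _) hB0
        have h3 := abs_NyA_le w α β hw hg0 hM0 hB hB0 y
        calc |NyA w α β g₀ y - NA w α β g₀ y / pA w α β g₀ y * pyA w α β g₀ y|
            ≤ |NyA w α β g₀ y| + |NA w α β g₀ y / pA w α β g₀ y * pyA w α β g₀ y| :=
              abs_sub _ _
          _ ≤ B * (1 + M) * (1 + |y|) * pA w α β g₀ y
              + B * ((1 + M) * (1 + |y|) * pA w α β g₀ y) := add_le_add h3 h2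
          _ ≤ B * (1 + M) * (1 + |y|) * Real.exp (M * |y| - y ^ 2 / 2)
              + B * ((1 + M) * (1 + |y|) * Real.exp (M * |y| - y ^ 2 / 2)) := by
              refine add_le_add (mul_le_mul_of_nonneg_left (hpe y) (by positivity)) ?_
              refine mul_le_mul_of_nonneg_left (mul_le_mul_of_nonneg_left (hpe y)
                (by positivity)) hB0
          _ = 2 * (B * (1 + M)) * ((1 + |y|) ^ 1 * Real.exp (M * |y| - y ^ 2 / 2)) := by ring
    -- Step: ∫ pgA = 0
    have hzero : (∫ y : ℝ, pgA w α β g₀ y) = 0 := by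
      have hint : ∀ k : κ, Integrable (fun y : ℝ =>
          w k * (β k * ((y - mA α β g₀ k) * nphi (y - mA α β g₀ k)))) :=
        fun k => ((integrable_shift_mul_nphi (mA α β g₀ k)).const_mul (β k)).const_mul (w k)
      have : (∫ y : ℝ, pgA w α β g₀ y)
          = ∑ k, ∫ y : ℝ, w k * (β k * ((y - mA α β g₀ k) * nphi (y - mA α β g₀ k))) := by
        rw [← integral_finset_sum _ fun k _ => hint k]
        rfl
      rw [this]
      apply Finset.sum_eq_zero
      intro k _
      rw [MeasureTheory.integral_const_mul, MeasureTheory.integral_const_mul,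
        integral_shift_mul_nphi]
      ring
    -- Step: ∫ pgA·log p as a sum
    have hsum1 : (∫ y : ℝ, pgA w α β g₀ y * Real.log (pA w α β g₀ y))
        = ∑ k, (w k * β k) * ∫ y : ℝ,
            (y - mA α β g₀ k) * nphi (y - mA α β g₀ k) * Real.log (pA w α β g₀ y) := by
      have heq : (fun y : ℝ => pgA w α β g₀ y * Real.log (pA w α β g₀ y))
          = fun y : ℝ => ∑ k, (w k * β k) *
              ((y - mA α β g₀ k) * nphi (y - mA α β g₀ k) * Real.log (pA w α β g₀ y)) := by
        funext y
        show (∑ k, w k * (β k * ((y - mA α β g₀ k) * nphi (y - mA α β g₀ k))))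
            * Real.log (pA w α β g₀ y) = _
        rw [Finset.sum_mul]
        exact Finset.sum_congr rfl fun k _ => by ring
      rw [heq, integral_finset_sum _ fun k _ => ((int_shiftlog k).const_mul _)]
      exact Finset.sum_congr rfl fun k _ => MeasureTheory.integral_const_mul _ _
    -- Step: IBP1
    have hIBP1 : ∀ k : κ, (∫ y : ℝ,
          (y - mA α β g₀ k) * nphi (y - mA α β g₀ k) * Real.log (pA w α β g₀ y))
        = ∫ y : ℝ, nphi (y - mA α β g₀ k) * (pyA w α β g₀ y / pA w α β g₀ y) := by
      intro k
      have hu : ∀ y : ℝ, HasDerivAt (fun y => -nphi (y - mA α β g₀ k))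
          ((y - mA α β g₀ k) * nphi (y - mA α β g₀ k)) y := by
        intro y
        have h := (hasDerivAt_nphi_y α β g₀ k y).neg
        exact h.congr_deriv (by ring)
      have hv : ∀ y : ℝ, HasDerivAt (fun y => Real.log (pA w α β g₀ y))
          (pyA w α β g₀ y / pA w α β g₀ y) y :=
        fun y => (hasDerivAt_pA_y w α β g₀ y).log (hp y).ne'
      have huv' : Integrable (fun y : ℝ =>
          (-nphi (y - mA α β g₀ k)) * (pyA w α β g₀ y / pA w α β g₀ y)) := by
        have := (int_phiratio k).neg
        refine this.congr ?_
        filter_upwards with y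
        simp only [Pi.neg_apply]
        ring
      have hu'v : Integrable (fun y : ℝ =>
          ((y - mA α β g₀ k) * nphi (y - mA α β g₀ k)) * Real.log (pA w α β g₀ y)) :=
        int_shiftlog k
      have huv : Integrable (fun y : ℝ =>
          (-nphi (y - mA α β g₀ k)) * Real.log (pA w α β g₀ y)) := by
        have := (int_philog k).neg
        refine this.congr ?_
        filter_upwards with y
        simp only [Pi.neg_apply]
        ring
      have h := integral_mul_deriv_eq_deriv_mul_of_integrable (fun y _ => hu y) (fun y _ => hv y) huv' hu'v huv
      have h2 : (∫ y : ℝ, (-nphi (y - mA α β g₀ k)) * (pyA w α β g₀ y / pA w α β g₀ y))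
          = -∫ y : ℝ, nphi (y - mA α β g₀ k) * (pyA w α β g₀ y / pA w α β g₀ y) := by
        rw [← MeasureTheory.integral_neg]
        congr 1
        funext y
        ring
      rw [h2] at h
      have h3 : (∫ y : ℝ, ((y - mA α β g₀ k) * nphi (y - mA α β g₀ k))
          * Real.log (pA w α β g₀ y))
          = ∫ y : ℝ, nphi (y - mA α β g₀ k) * (pyA w α β g₀ y / pA w α β g₀ y) := by
        have := neg_injective h
        linarith [this]
      calc (∫ y : ℝ, (y - mA α β g₀ k) * nphi (y - mA α β g₀ k) * Real.log (pA w α β g₀ y))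
          = ∫ y : ℝ, ((y - mA α β g₀ k) * nphi (y - mA α β g₀ k)) * Real.log (pA w α β g₀ y) :=
            rfl
        _ = _ := h3
    -- Step: recombine the sum into one integral
    have hsum2 : (∑ k, (w k * β k) * ∫ y : ℝ,
          nphi (y - mA α β g₀ k) * (pyA w α β g₀ y / pA w α β g₀ y))
        = ∫ y : ℝ, NA w α β g₀ y / pA w α β g₀ y * pyA w α β g₀ y := by
      have h1 : (∑ k, (w k * β k) * ∫ y : ℝ,
            nphi (y - mA α β g₀ k) * (pyA w α β g₀ y / pA w α β g₀ y))
          = ∑ k, ∫ y : ℝ, (w k * β k) *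
              (nphi (y - mA α β g₀ k) * (pyA w α β g₀ y / pA w α β g₀ y)) :=
        Finset.sum_congr rfl fun k _ => (MeasureTheory.integral_const_mul _ _).symm
      rw [h1, ← integral_finset_sum _ fun k _ => ((int_phiratio k).const_mul _)]
      congr 1
      funext y
      have : (∑ k, (w k * β k) * (nphi (y - mA α β g₀ k)
          * (pyA w α β g₀ y / pA w α β g₀ y)))
          = (∑ k, w k * β k * nphi (y - mA α β g₀ k)) * (pyA w α β g₀ y / pA w α β g₀ y) := by
        rw [Finset.sum_mul]
        exact Finset.sum_congr rfl fun k _ => by ring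
      rw [this]
      show NA w α β g₀ y * (pyA w α β g₀ y / pA w α β g₀ y) = _
      ring
    -- Step: IBP2
    have hIBP2 : (∫ y : ℝ, NA w α β g₀ y / pA w α β g₀ y * pyA w α β g₀ y)
        = -∫ y : ℝ, (NyA w α β g₀ y - NA w α β g₀ y / pA w α β g₀ y * pyA w α β g₀ y) := by
      have hu : ∀ y : ℝ, HasDerivAt (fun y => NA w α β g₀ y / pA w α β g₀ y)
          ((NyA w α β g₀ y * pA w α β g₀ y - NA w α β g₀ y * pyA w α β g₀ y)
            / (pA w α β g₀ y) ^ 2) y :=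
        fun y => (hasDerivAt_NA_y w α β g₀ y).div (hasDerivAt_pA_y w α β g₀ y) (hp y).ne'
      have hv : ∀ y : ℝ, HasDerivAt (fun y => pA w α β g₀ y) (pyA w α β g₀ y) y :=
        hasDerivAt_pA_y w α β g₀
      have hkey : ∀ y : ℝ, (NyA w α β g₀ y * pA w α β g₀ y
            - NA w α β g₀ y * pyA w α β g₀ y) / (pA w α β g₀ y) ^ 2 * pA w α β g₀ y
          = NyA w α β g₀ y - NA w α β g₀ y / pA w α β g₀ y * pyA w α β g₀ y := by
        intro y
        have h2 := (hp y).ne'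
        field_simp
      have hu'v : Integrable (fun y : ℝ => (NyA w α β g₀ y * pA w α β g₀ y
          - NA w α β g₀ y * pyA w α β g₀ y) / (pA w α β g₀ y) ^ 2 * pA w α β g₀ y) := by
        refine int_u'v.congr ?_
        filter_upwards with y
        exact (hkey y).symm
      have huv : Integrable (fun y : ℝ => NA w α β g₀ y / pA w α β g₀ y * pA w α β g₀ y) := by
        refine int_NA.congr ?_
        filter_upwards with y
        exact (div_mul_cancel₀ _ (hp y).ne').symm
      have h := integral_mul_deriv_eq_deriv_mul_of_integrable (fun y _ => hu y) (fun y _ => hv y) int_ratio_py hu'v huv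
      rw [h]
      congr 1
      congr 1
      funext y
      exact hkey y
    -- Step: pointwise identity for the final integrand
    have hpoint : ∀ y : ℝ, NyA w α β g₀ y - NA w α β g₀ y / pA w α β g₀ y * pyA w α β g₀ y
        = ∑ k, w k * nphi (y - mA α β g₀ k) *
            ((mA α β g₀ k - SmA w α β g₀ y / pA w α β g₀ y) *
             (β k - NA w α β g₀ y / pA w α β g₀ y)) := by
      intro y
      have hpy := (hp y).ne'
      have e1 : NyA w α β g₀ y
          = (∑ k, w k * β k * mA α β g₀ k * nphi (y - mA α β g₀ k)) - y * NA w α β g₀ y := by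
        unfold NyA NA
        rw [Finset.mul_sum, ← Finset.sum_sub_distrib]
        exact Finset.sum_congr rfl fun k _ => by ring
      have e2 : pyA w α β g₀ y = SmA w α β g₀ y - y * pA w α β g₀ y := by
        unfold pyA SmA pA
        rw [Finset.mul_sum, ← Finset.sum_sub_distrib]
        exact Finset.sum_congr rfl fun k _ => by ring
      have e3 : (∑ k, w k * nphi (y - mA α β g₀ k) *
            ((mA α β g₀ k - SmA w α β g₀ y / pA w α β g₀ y) *
             (β k - NA w α β g₀ y / pA w α β g₀ y)))
          = (∑ k, w k * β k * mA α β g₀ k * nphi (y - mA α β g₀ k))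
            - SmA w α β g₀ y * NA w α β g₀ y / pA w α β g₀ y := by
        have expand : ∀ k : κ, w k * nphi (y - mA α β g₀ k) *
              ((mA α β g₀ k - SmA w α β g₀ y / pA w α β g₀ y) *
               (β k - NA w α β g₀ y / pA w α β g₀ y))
            = w k * β k * mA α β g₀ k * nphi (y - mA α β g₀ k)
              - NA w α β g₀ y / pA w α β g₀ y * (w k * mA α β g₀ k * nphi (y - mA α β g₀ k))
              - SmA w α β g₀ y / pA w α β g₀ y * (w k * β k * nphi (y - mA α β g₀ k))
              + SmA w α β g₀ y * NA w α β g₀ y / (pA w α β g₀ y) ^ 2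
                  * (w k * nphi (y - mA α β g₀ k)) :=
          fun k => by ring
        rw [Finset.sum_congr rfl fun k _ => expand k]
        rw [Finset.sum_add_distrib, Finset.sum_sub_distrib, Finset.sum_sub_distrib,
          ← Finset.mul_sum, ← Finset.mul_sum, ← Finset.mul_sum]
        show _ - NA w α β g₀ y / pA w α β g₀ y * SmA w α β g₀ y
            - SmA w α β g₀ y / pA w α β g₀ y * NA w α β g₀ y
            + SmA w α β g₀ y * NA w α β g₀ y / (pA w α β g₀ y) ^ 2 * pA w α β g₀ y = _
        field_simp
        ring
      rw [e1, e2, e3]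
      field_simp
      ring
    -- Assemble
    rw [integral_add int_pgAlog int_pgA, hzero, add_zero, hsum1,
      Finset.sum_congr rfl fun k _ => congrArg (fun z => w k * β k * z) (hIBP1 k),
      hsum2, hIBP2]
    rw [neg_neg]
    congr 1
    funext y
    exact hpoint y
  rw [hConst, ← hVal]
  exact hEnt.const_sub _

end Abstract3

end Stmt5

open Stmt5 in
/-- Paper's Theorem 2 (second gradient formula), real-valued convention: in the two-user scalar
Gaussian MAC with finite-alphabet inputs, for every amplitude `g₂ > 0` the mutual information
is differentiable in `g₂` with `∂I/∂g₂ = snr·(b²·g₂·E₂₂ + a·b·g₁·E₁₂)`. -/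
theorem stmt_5 {ι₁ ι₂ : Type*} [Fintype ι₁] [Fintype ι₂]
    (v₁ : ι₁ → ℝ) (v₂ : ι₂ → ℝ) (p₁ : ι₁ → ℝ) (p₂ : ι₂ → ℝ)
    (hp₁pos : ∀ i, 0 < p₁ i) (hp₁sum : ∑ i, p₁ i = 1)
    (hp₂pos : ∀ j, 0 < p₂ j) (hp₂sum : ∑ j, p₂ j = 1)
    (snr a b g₁ : ℝ) (hsnr : 0 < snr) (hg₁ : 0 ≤ g₁)
    (φ : ℝ → ℝ) (hφ : φ = fun t => (Real.sqrt (2 * Real.pi))⁻¹ * Real.exp (-t ^ 2 / 2))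
    (μv : ℝ → ℝ → ι₁ → ι₂ → ℝ)
    (hμv : μv = fun g₁ g₂ i j => Real.sqrt snr * (a * g₁ * v₁ i + b * g₂ * v₂ j))
    (py : ℝ → ℝ → ℝ → ℝ)
    (hpy : py = fun g₁ g₂ y => ∑ i, ∑ j, p₁ i * p₂ j * φ (y - μv g₁ g₂ i j))
    (I : ℝ → ℝ → ℝ)
    (hI : I = fun g₁ g₂ => ∫ y : ℝ, ∑ i, ∑ j, p₁ i * p₂ j * φ (y - μv g₁ g₂ i j) *
        Real.log (φ (y - μv g₁ g₂ i j) / py g₁ g₂ y))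
    (xhat₁ : ℝ → ℝ → ℝ → ℝ)
    (hxhat₁ : xhat₁ = fun g₁ g₂ y =>
        (∑ i, ∑ j, v₁ i * (p₁ i * p₂ j * φ (y - μv g₁ g₂ i j))) / py g₁ g₂ y)
    (xhat₂ : ℝ → ℝ → ℝ → ℝ)
    (hxhat₂ : xhat₂ = fun g₁ g₂ y =>
        (∑ i, ∑ j, v₂ j * (p₁ i * p₂ j * φ (y - μv g₁ g₂ i j))) / py g₁ g₂ y)
    (E₂₂ : ℝ → ℝ → ℝ)
    (hE₂₂ : E₂₂ = fun g₁ g₂ => ∫ y : ℝ, ∑ i, ∑ j, p₁ i * p₂ j * φ (y - μv g₁ g₂ i j) *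
        (v₂ j - xhat₂ g₁ g₂ y) ^ 2)
    (E₁₂ : ℝ → ℝ → ℝ)
    (hE₁₂ : E₁₂ = fun g₁ g₂ => ∫ y : ℝ, ∑ i, ∑ j, p₁ i * p₂ j * φ (y - μv g₁ g₂ i j) *
        ((v₁ i - xhat₁ g₁ g₂ y) * (v₂ j - xhat₂ g₁ g₂ y))) :
    ∀ g₂ : ℝ, 0 < g₂ →
      HasDerivAt (fun g => I g₁ g)
        (snr * (b ^ 2 * g₂ * E₂₂ g₁ g₂ + a * b * g₁ * E₁₂ g₁ g₂)) g₂ := by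
  intro g₂ hg₂
  have hne1 : Nonempty ι₁ := by
    by_contra h
    rw [not_nonempty_iff] at h
    rw [Finset.univ_eq_empty, Finset.sum_empty] at hp₁sum
    exact absurd hp₁sum (by norm_num)
  have hne2 : Nonempty ι₂ := by
    by_contra h
    rw [not_nonempty_iff] at h
    rw [Finset.univ_eq_empty, Finset.sum_empty] at hp₂sum
    exact absurd hp₂sum (by norm_num)
  obtain ⟨w, hwdef⟩ : ∃ w : ι₁ × ι₂ → ℝ, w = fun k => p₁ k.1 * p₂ k.2 := ⟨_, rfl⟩
  obtain ⟨αc, hαdef⟩ : ∃ αc : ι₁ × ι₂ → ℝ,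
    αc = fun k => Real.sqrt snr * a * g₁ * v₁ k.1 := ⟨_, rfl⟩
  obtain ⟨βc, hβdef⟩ : ∃ βc : ι₁ × ι₂ → ℝ,
    βc = fun k => Real.sqrt snr * b * v₂ k.2 := ⟨_, rfl⟩
  have hs2 : Real.sqrt snr * Real.sqrt snr = snr := Real.mul_self_sqrt hsnr.le
  have hw : ∀ k, 0 < w k := fun k => by rw [hwdef]; exact mul_pos (hp₁pos _) (hp₂pos _)
  have hw1 : ∑ k, w k = 1 := by
    rw [hwdef, Fintype.sum_prod_type]
    calc ∑ i, ∑ j, p₁ i * p₂ j = ∑ i, p₁ i * ∑ j, p₂ j :=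
          Finset.sum_congr rfl fun i _ => (Finset.mul_sum _ _ _).symm
      _ = 1 := by rw [hp₂sum]; simp only [mul_one]; exact hp₁sum
  have hφn : φ = nphi := by rw [hφ]; rfl
  have hμ : ∀ g i j, μv g₁ g i j = mA αc βc g (i, j) := by
    intro g i j
    rw [hμv]
    show Real.sqrt snr * (a * g₁ * v₁ i + b * g * v₂ j) = αc (i, j) + βc (i, j) * g
    rw [hαdef, hβdef]
    ring
  have hpyA : ∀ g y, py g₁ g y = pA w αc βc g y := by
    intro g y
    rw [hpy]
    show (∑ i, ∑ j, p₁ i * p₂ j * φ (y - μv g₁ g i j)) = _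
    unfold pA
    rw [Fintype.sum_prod_type]
    refine Finset.sum_congr rfl fun i _ => Finset.sum_congr rfl fun j _ => ?_
    rw [hφn, hμ, hwdef]
  have H := abstract_deriv w αc βc hw hw1 g₂
  -- function equality
  have hfun : (fun g => I g₁ g)
      = (fun g => ∫ y : ℝ, ∑ k, w k * nphi (y - mA αc βc g k) *
          Real.log (nphi (y - mA αc βc g k) / pA w αc βc g y)) := by
    funext g
    rw [hI]
    show (∫ y : ℝ, ∑ i, ∑ j, p₁ i * p₂ j * φ (y - μv g₁ g i j) *
        Real.log (φ (y - μv g₁ g i j) / py g₁ g y)) = _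
    congr 1
    funext y
    rw [Fintype.sum_prod_type]
    refine Finset.sum_congr rfl fun i _ => Finset.sum_congr rfl fun j _ => ?_
    rw [hφn, hμ, hpyA, hwdef]
  -- numerator identities
  have hnum2 : ∀ y, NA w αc βc g₂ y
      = Real.sqrt snr * b * (∑ i, ∑ j, v₂ j * (p₁ i * p₂ j * φ (y - μv g₁ g₂ i j))) := by
    intro y
    unfold NA
    rw [Fintype.sum_prod_type, Finset.mul_sum]
    refine Finset.sum_congr rfl fun i _ => ?_
    rw [Finset.mul_sum]
    refine Finset.sum_congr rfl fun j _ => ?_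
    rw [hφn, hμ, hwdef, hβdef]
    ring
  have hnum1 : ∀ y, SmA w αc βc g₂ y
      = Real.sqrt snr * a * g₁ * (∑ i, ∑ j, v₁ i * (p₁ i * p₂ j * φ (y - μv g₁ g₂ i j)))
        + Real.sqrt snr * b * g₂ * (∑ i, ∑ j, v₂ j * (p₁ i * p₂ j * φ (y - μv g₁ g₂ i j))) := by
    intro y
    unfold SmA
    rw [Fintype.sum_prod_type, Finset.mul_sum, Finset.mul_sum, ← Finset.sum_add_distrib]
    refine Finset.sum_congr rfl fun i _ => ?_
    rw [Finset.mul_sum, Finset.mul_sum, ← Finset.sum_add_distrib]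
    refine Finset.sum_congr rfl fun j _ => ?_
    simp only [hφn, hμ, hwdef, mA, hαdef, hβdef]
    ring
  have hppos : ∀ y, 0 < pA w αc βc g₂ y := pA_pos w αc βc hw g₂
  have hx2 : ∀ y, NA w αc βc g₂ y / pA w αc βc g₂ y = Real.sqrt snr * b * xhat₂ g₁ g₂ y := by
    intro y
    rw [hnum2, hxhat₂]
    show _ = Real.sqrt snr * b *
      ((∑ i, ∑ j, v₂ j * (p₁ i * p₂ j * φ (y - μv g₁ g₂ i j))) / py g₁ g₂ y)
    rw [hpyA]
    ring
  have hx1 : ∀ y, SmA w αc βc g₂ y / pA w αc βc g₂ y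
      = Real.sqrt snr * a * g₁ * xhat₁ g₁ g₂ y + Real.sqrt snr * b * g₂ * xhat₂ g₁ g₂ y := by
    intro y
    rw [hnum1, hxhat₁, hxhat₂]
    show _ = Real.sqrt snr * a * g₁ *
        ((∑ i, ∑ j, v₁ i * (p₁ i * p₂ j * φ (y - μv g₁ g₂ i j))) / py g₁ g₂ y)
      + Real.sqrt snr * b * g₂ *
        ((∑ i, ∑ j, v₂ j * (p₁ i * p₂ j * φ (y - μv g₁ g₂ i j))) / py g₁ g₂ y)
    rw [hpyA]
    ring
  -- κ-form of the E-integrands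
  have hf22 : ∀ y : ℝ, (∑ i, ∑ j, p₁ i * p₂ j * φ (y - μv g₁ g₂ i j) *
        (v₂ j - xhat₂ g₁ g₂ y) ^ 2)
      = ∑ k, w k * (nphi (y - mA αc βc g₂ k) * (v₂ k.2 - xhat₂ g₁ g₂ y) ^ 2) := by
    intro y
    rw [Fintype.sum_prod_type]
    refine Finset.sum_congr rfl fun i _ => Finset.sum_congr rfl fun j _ => ?_
    rw [hφn, hμ, hwdef]
    ring
  have hf12 : ∀ y : ℝ, (∑ i, ∑ j, p₁ i * p₂ j * φ (y - μv g₁ g₂ i j) *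
        ((v₁ i - xhat₁ g₁ g₂ y) * (v₂ j - xhat₂ g₁ g₂ y)))
      = ∑ k, w k * (nphi (y - mA αc βc g₂ k) *
          ((v₁ k.1 - xhat₁ g₁ g₂ y) * (v₂ k.2 - xhat₂ g₁ g₂ y))) := by
    intro y
    rw [Fintype.sum_prod_type]
    refine Finset.sum_congr rfl fun i _ => Finset.sum_congr rfl fun j _ => ?_
    rw [hφn, hμ, hwdef]
    ring
  -- bounds on the conditional means
  obtain ⟨V₁, hV1def⟩ : ∃ V : ℝ, V = ∑ i, |v₁ i| := ⟨_, rfl⟩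
  obtain ⟨V₂, hV2def⟩ : ∃ V : ℝ, V = ∑ j, |v₂ j| := ⟨_, rfl⟩
  have hV1 : ∀ i, |v₁ i| ≤ V₁ := fun i => by
    rw [hV1def]; exact Finset.single_le_sum (f := fun i => |v₁ i|)
      (fun _ _ => abs_nonneg _) (mem_univ i)
  have hV2 : ∀ j, |v₂ j| ≤ V₂ := fun j => by
    rw [hV2def]; exact Finset.single_le_sum (f := fun j => |v₂ j|)
      (fun _ _ => abs_nonneg _) (mem_univ j)
  have hV10 : 0 ≤ V₁ := le_trans (abs_nonneg _) (hV1 (Classical.arbitrary ι₁))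
  have hV20 : 0 ≤ V₂ := le_trans (abs_nonneg _) (hV2 (Classical.arbitrary ι₂))
  have hxhat2b : ∀ y, |xhat₂ g₁ g₂ y| ≤ V₂ := by
    intro y
    have hnum : |(∑ i, ∑ j, v₂ j * (p₁ i * p₂ j * φ (y - μv g₁ g₂ i j)))|
        ≤ V₂ * pA w αc βc g₂ y := by
      have heq : (∑ i, ∑ j, v₂ j * (p₁ i * p₂ j * φ (y - μv g₁ g₂ i j)))
          = ∑ k, w k * (v₂ k.2 * nphi (y - mA αc βc g₂ k)) := by
        rw [Fintype.sum_prod_type]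
        refine Finset.sum_congr rfl fun i _ => Finset.sum_congr rfl fun j _ => ?_
        rw [hφn, hμ, hwdef]
        ring
      rw [heq]
      refine sum_w_bound w αc βc hw _ g₂ y V₂ fun k => ?_
      rw [abs_mul, abs_of_pos (nphi_pos _)]
      exact mul_le_mul_of_nonneg_right (hV2 k.2) (nphi_pos _).le
    rw [hxhat₂]
    show |(∑ i, ∑ j, v₂ j * (p₁ i * p₂ j * φ (y - μv g₁ g₂ i j))) / py g₁ g₂ y| ≤ V₂
    rw [hpyA, abs_div, abs_of_pos (hppos y), div_le_iff₀ (hppos y)]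
    exact hnum
  have hxhat1b : ∀ y, |xhat₁ g₁ g₂ y| ≤ V₁ := by
    intro y
    have hnum : |(∑ i, ∑ j, v₁ i * (p₁ i * p₂ j * φ (y - μv g₁ g₂ i j)))|
        ≤ V₁ * pA w αc βc g₂ y := by
      have heq : (∑ i, ∑ j, v₁ i * (p₁ i * p₂ j * φ (y - μv g₁ g₂ i j)))
          = ∑ k, w k * (v₁ k.1 * nphi (y - mA αc βc g₂ k)) := by
        rw [Fintype.sum_prod_type]
        refine Finset.sum_congr rfl fun i _ => Finset.sum_congr rfl fun j _ => ?_
        rw [hφn, hμ, hwdef]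
        ring
      rw [heq]
      refine sum_w_bound w αc βc hw _ g₂ y V₁ fun k => ?_
      rw [abs_mul, abs_of_pos (nphi_pos _)]
      exact mul_le_mul_of_nonneg_right (hV1 k.1) (nphi_pos _).le
    rw [hxhat₁]
    show |(∑ i, ∑ j, v₁ i * (p₁ i * p₂ j * φ (y - μv g₁ g₂ i j))) / py g₁ g₂ y| ≤ V₁
    rw [hpyA, abs_div, abs_of_pos (hppos y), div_le_iff₀ (hppos y)]
    exact hnum
  -- continuity of the conditional means
  have hcontnum2 : Continuous (fun y => ∑ i, ∑ j, v₂ j * (p₁ i * p₂ j * φ (y - μv g₁ g₂ i j))) := by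
    refine continuous_finset_sum _ fun i _ => continuous_finset_sum _ fun j _ => ?_
    rw [hφn]
    fun_prop
  have hcontnum1 : Continuous (fun y => ∑ i, ∑ j, v₁ i * (p₁ i * p₂ j * φ (y - μv g₁ g₂ i j))) := by
    refine continuous_finset_sum _ fun i _ => continuous_finset_sum _ fun j _ => ?_
    rw [hφn]
    fun_prop
  have hcontx2 : Continuous (fun y => xhat₂ g₁ g₂ y) := by
    rw [hxhat₂]
    show Continuous fun y =>
      (∑ i, ∑ j, v₂ j * (p₁ i * p₂ j * φ (y - μv g₁ g₂ i j))) / py g₁ g₂ y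
    have hxx : (fun y => (∑ i, ∑ j, v₂ j * (p₁ i * p₂ j * φ (y - μv g₁ g₂ i j)))
        / py g₁ g₂ y) = fun y => (∑ i, ∑ j, v₂ j * (p₁ i * p₂ j * φ (y - μv g₁ g₂ i j)))
        / pA w αc βc g₂ y := funext fun y => by rw [hpyA]
    rw [hxx]
    exact hcontnum2.div (continuous_pA w αc βc g₂) fun y => (hppos y).ne'
  have hcontx1 : Continuous (fun y => xhat₁ g₁ g₂ y) := by
    rw [hxhat₁]
    show Continuous fun y =>
      (∑ i, ∑ j, v₁ i * (p₁ i * p₂ j * φ (y - μv g₁ g₂ i j))) / py g₁ g₂ y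
    have hxx : (fun y => (∑ i, ∑ j, v₁ i * (p₁ i * p₂ j * φ (y - μv g₁ g₂ i j)))
        / py g₁ g₂ y) = fun y => (∑ i, ∑ j, v₁ i * (p₁ i * p₂ j * φ (y - μv g₁ g₂ i j)))
        / pA w αc βc g₂ y := funext fun y => by rw [hpyA]
    rw [hxx]
    exact hcontnum1.div (continuous_pA w αc βc g₂) fun y => (hppos y).ne'
  -- integrability of the E-integrands
  have hgauss : ∀ y, pA w αc βc g₂ y ≤
      Real.exp ((∑ k, |mA αc βc g₂ k|) * |y| - y ^ 2 / 2) :=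
    pA_le_gauss w αc βc hw hw1 (Mg_bound αc βc g₂)
  have hint22 : Integrable (fun y : ℝ => ∑ i, ∑ j, p₁ i * p₂ j * φ (y - μv g₁ g₂ i j) *
      (v₂ j - xhat₂ g₁ g₂ y) ^ 2) := by
    refine integrable_of_le_poly_gauss ?_ ((2 * V₂) ^ 2) (∑ k, |mA αc βc g₂ k|) 0 ?_
    · refine continuous_finset_sum _ fun i _ => continuous_finset_sum _ fun j _ => ?_
      rw [hφn]
      exact ((continuous_const.mul (continuous_nphi.comp
        (continuous_id.sub continuous_const))).mul ((continuous_const.sub hcontx2).pow 2))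
    · intro y
      rw [hf22 y]
      have h := sum_w_bound w αc βc hw
        (fun k => nphi (y - mA αc βc g₂ k) * (v₂ k.2 - xhat₂ g₁ g₂ y) ^ 2) g₂ y
        ((2 * V₂) ^ 2) ?_
      · calc |∑ k, w k * (nphi (y - mA αc βc g₂ k) * (v₂ k.2 - xhat₂ g₁ g₂ y) ^ 2)|
            ≤ (2 * V₂) ^ 2 * pA w αc βc g₂ y := h
          _ ≤ (2 * V₂) ^ 2 * Real.exp ((∑ k, |mA αc βc g₂ k|) * |y| - y ^ 2 / 2) :=
              mul_le_mul_of_nonneg_left (hgauss y) (by positivity)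
          _ = (2 * V₂) ^ 2 * ((1 + |y|) ^ 0
              * Real.exp ((∑ k, |mA αc βc g₂ k|) * |y| - y ^ 2 / 2)) := by ring
      · intro k
        have h1 : |v₂ k.2 - xhat₂ g₁ g₂ y| ≤ 2 * V₂ := by
          calc |v₂ k.2 - xhat₂ g₁ g₂ y| ≤ |v₂ k.2| + |xhat₂ g₁ g₂ y| := abs_sub _ _
            _ ≤ V₂ + V₂ := add_le_add (hV2 k.2) (hxhat2b y)
            _ = 2 * V₂ := by ring
        have h2 : (v₂ k.2 - xhat₂ g₁ g₂ y) ^ 2 ≤ (2 * V₂) ^ 2 := by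
          rw [← sq_abs]
          exact pow_le_pow_left₀ (abs_nonneg _) h1 2
        calc |nphi (y - mA αc βc g₂ k) * (v₂ k.2 - xhat₂ g₁ g₂ y) ^ 2|
            = nphi (y - mA αc βc g₂ k) * (v₂ k.2 - xhat₂ g₁ g₂ y) ^ 2 := by
              rw [abs_mul, abs_of_pos (nphi_pos _), abs_of_nonneg (sq_nonneg _)]
          _ ≤ nphi (y - mA αc βc g₂ k) * (2 * V₂) ^ 2 :=
              mul_le_mul_of_nonneg_left h2 (nphi_pos _).le
          _ = (2 * V₂) ^ 2 * nphi (y - mA αc βc g₂ k) := by ring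
  have hint12 : Integrable (fun y : ℝ => ∑ i, ∑ j, p₁ i * p₂ j * φ (y - μv g₁ g₂ i j) *
      ((v₁ i - xhat₁ g₁ g₂ y) * (v₂ j - xhat₂ g₁ g₂ y))) := by
    refine integrable_of_le_poly_gauss ?_ ((2 * V₁) * (2 * V₂)) (∑ k, |mA αc βc g₂ k|) 0 ?_
    · refine continuous_finset_sum _ fun i _ => continuous_finset_sum _ fun j _ => ?_
      rw [hφn]
      exact ((continuous_const.mul (continuous_nphi.comp
        (continuous_id.sub continuous_const))).mul
        ((continuous_const.sub hcontx1).mul (continuous_const.sub hcontx2)))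
    · intro y
      rw [hf12 y]
      have h := sum_w_bound w αc βc hw
        (fun k => nphi (y - mA αc βc g₂ k) *
          ((v₁ k.1 - xhat₁ g₁ g₂ y) * (v₂ k.2 - xhat₂ g₁ g₂ y))) g₂ y
        ((2 * V₁) * (2 * V₂)) ?_
      · calc |∑ k, w k * (nphi (y - mA αc βc g₂ k) *
              ((v₁ k.1 - xhat₁ g₁ g₂ y) * (v₂ k.2 - xhat₂ g₁ g₂ y)))|
            ≤ (2 * V₁) * (2 * V₂) * pA w αc βc g₂ y := h
          _ ≤ (2 * V₁) * (2 * V₂)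
              * Real.exp ((∑ k, |mA αc βc g₂ k|) * |y| - y ^ 2 / 2) :=
              mul_le_mul_of_nonneg_left (hgauss y) (by positivity)
          _ = (2 * V₁) * (2 * V₂) * ((1 + |y|) ^ 0
              * Real.exp ((∑ k, |mA αc βc g₂ k|) * |y| - y ^ 2 / 2)) := by ring
      · intro k
        have h1 : |v₁ k.1 - xhat₁ g₁ g₂ y| ≤ 2 * V₁ := by
          calc |v₁ k.1 - xhat₁ g₁ g₂ y| ≤ |v₁ k.1| + |xhat₁ g₁ g₂ y| := abs_sub _ _
            _ ≤ V₁ + V₁ := add_le_add (hV1 k.1) (hxhat1b y)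
            _ = 2 * V₁ := by ring
        have h2 : |v₂ k.2 - xhat₂ g₁ g₂ y| ≤ 2 * V₂ := by
          calc |v₂ k.2 - xhat₂ g₁ g₂ y| ≤ |v₂ k.2| + |xhat₂ g₁ g₂ y| := abs_sub _ _
            _ ≤ V₂ + V₂ := add_le_add (hV2 k.2) (hxhat2b y)
            _ = 2 * V₂ := by ring
        calc |nphi (y - mA αc βc g₂ k) * ((v₁ k.1 - xhat₁ g₁ g₂ y)
              * (v₂ k.2 - xhat₂ g₁ g₂ y))|
            = nphi (y - mA αc βc g₂ k) * (|v₁ k.1 - xhat₁ g₁ g₂ y|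
              * |v₂ k.2 - xhat₂ g₁ g₂ y|) := by
              rw [abs_mul, abs_of_pos (nphi_pos _), abs_mul]
          _ ≤ nphi (y - mA αc βc g₂ k) * ((2 * V₁) * (2 * V₂)) := by
              refine mul_le_mul_of_nonneg_left ?_ (nphi_pos _).le
              exact mul_le_mul h1 h2 (abs_nonneg _) (by positivity)
          _ = (2 * V₁) * (2 * V₂) * nphi (y - mA αc βc g₂ k) := by ring
  -- the pointwise identity between the abstract derivative integrand and the MMSE integrands
  have hpt : ∀ y : ℝ, (∑ k, w k * nphi (y - mA αc βc g₂ k) *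
        ((mA αc βc g₂ k - SmA w αc βc g₂ y / pA w αc βc g₂ y) *
         (βc k - NA w αc βc g₂ y / pA w αc βc g₂ y)))
      = snr * (b ^ 2 * g₂) * (∑ i, ∑ j, p₁ i * p₂ j * φ (y - μv g₁ g₂ i j) *
          (v₂ j - xhat₂ g₁ g₂ y) ^ 2)
        + snr * (a * b * g₁) * (∑ i, ∑ j, p₁ i * p₂ j * φ (y - μv g₁ g₂ i j) *
          ((v₁ i - xhat₁ g₁ g₂ y) * (v₂ j - xhat₂ g₁ g₂ y))) := by
    intro y
    rw [hf22 y, hf12 y, hx1 y, hx2 y, Finset.mul_sum, Finset.mul_sum,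
      ← Finset.sum_add_distrib]
    refine Finset.sum_congr rfl fun k _ => ?_
    simp only [mA, hαdef, hβdef]
    generalize hgen : Real.sqrt snr = sq at hs2 ⊢
    rw [← hs2]
    ring
  -- conclude
  have hval : (∫ y : ℝ, ∑ k, w k * nphi (y - mA αc βc g₂ k) *
        ((mA αc βc g₂ k - SmA w αc βc g₂ y / pA w αc βc g₂ y) *
         (βc k - NA w αc βc g₂ y / pA w αc βc g₂ y)))
      = snr * (b ^ 2 * g₂ * E₂₂ g₁ g₂ + a * b * g₁ * E₁₂ g₁ g₂) := by
    calc (∫ y : ℝ, ∑ k, w k * nphi (y - mA αc βc g₂ k) *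
          ((mA αc βc g₂ k - SmA w αc βc g₂ y / pA w αc βc g₂ y) *
           (βc k - NA w αc βc g₂ y / pA w αc βc g₂ y)))
        = ∫ y : ℝ, (snr * (b ^ 2 * g₂) * (∑ i, ∑ j, p₁ i * p₂ j * φ (y - μv g₁ g₂ i j) *
              (v₂ j - xhat₂ g₁ g₂ y) ^ 2)
            + snr * (a * b * g₁) * (∑ i, ∑ j, p₁ i * p₂ j * φ (y - μv g₁ g₂ i j) *
              ((v₁ i - xhat₁ g₁ g₂ y) * (v₂ j - xhat₂ g₁ g₂ y)))) := by
          congr 1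
          funext y
          exact hpt y
      _ = snr * (b ^ 2 * g₂) * (∫ y : ℝ, ∑ i, ∑ j, p₁ i * p₂ j * φ (y - μv g₁ g₂ i j) *
              (v₂ j - xhat₂ g₁ g₂ y) ^ 2)
          + snr * (a * b * g₁) * (∫ y : ℝ, ∑ i, ∑ j, p₁ i * p₂ j * φ (y - μv g₁ g₂ i j) *
              ((v₁ i - xhat₁ g₁ g₂ y) * (v₂ j - xhat₂ g₁ g₂ y))) := by
          rw [integral_add (hint22.const_mul _) (hint12.const_mul _),
            MeasureTheory.integral_const_mul, MeasureTheory.integral_const_mul]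
      _ = snr * (b ^ 2 * g₂ * E₂₂ g₁ g₂ + a * b * g₁ * E₁₂ g₁ g₂) := by
          rw [hE₂₂, hE₁₂]
          ring
  rw [hfun, ← hval]
  exact H
end
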